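/- arXiv:2605.00995 — 5 statements merged into one kernel-verified Lean document; each statement's English description precedes it below -/
import Mathlib

section
/- There exist absolute constants c > 0 and C > 0 such that the following holds. For all positive integers m and n and all functions L₁,…,Lₙ : 𝔽₂^m → 𝔽₂ each of degree at most 1 (i.e., affine functions), the output distribution of the tuple (L₁,…,Lₙ) satisfies ‖(L₁,…,Lₙ) − Ber(1/3)^⊗n‖_TV ≥ 1 − C·2^{−c·n}. -/
open Finset

/-- Distribution of `f(X)` on `β` for `X` uniform on the finite type `α`. -/
noncomputable def distOf {α β : Type*} [Fintype α] [DecidableEq β] (f : α → β) (y : β) : ℝ :=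
  ((Finset.univ.filter fun x => f x = y).card : ℝ) / (Fintype.card α : ℝ)

/-- Output distribution on `𝔽₂ⁿ` of the tuple `(P₁(X),…,Pₙ(X))` for uniform `X ∈ 𝔽₂^m`. -/
noncomputable def outDist {m n : ℕ} (P : Fin n → (Fin m → ZMod 2) → ZMod 2) :
    (Fin n → ZMod 2) → ℝ :=
  distOf (fun x i => P i x)

/-- Total variation distance between two distributions on a finite type. -/
noncomputable def tvDist {β : Type*} [Fintype β] (μ ν : β → ℝ) : ℝ :=
  (1 / 2) * ∑ y, |μ y - ν y|

/-- The distribution `Ber(1/3)^{⊗n}` on `𝔽₂ⁿ`. -/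
noncomputable def ber13 {n : ℕ} (y : Fin n → ZMod 2) : ℝ :=
  (1 / 3 : ℝ) ^ (Finset.univ.filter fun i => y i = 1).card *
    (2 / 3 : ℝ) ^ (n - (Finset.univ.filter fun i => y i = 1).card)

/-- `P : 𝔽₂^m → 𝔽₂` has degree at most `d`. -/
def DegLE {m : ℕ} (d : ℕ) (P : (Fin m → ZMod 2) → ZMod 2) : Prop :=
  ∃ p : MvPolynomial (Fin m) (ZMod 2), p.totalDegree ≤ d ∧ ∀ x, MvPolynomial.eval x p = P x

/-- `rank_{d'}(P) ≤ k`. -/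
def RankLE {m : ℕ} (d' k : ℕ) (P : (Fin m → ZMod 2) → ZMod 2) : Prop :=
  ∃ (Q : Fin k → (Fin m → ZMod 2) → ZMod 2) (Γ : (Fin k → ZMod 2) → ZMod 2),
    (∀ j, DegLE d' (Q j)) ∧ ∀ x, P x = Γ (fun j => Q j x)

/-- `Pr_{X uniform}[P(X) = 1]`. -/
noncomputable def prOne {m : ℕ} (P : (Fin m → ZMod 2) → ZMod 2) : ℝ :=
  distOf P 1

-- Auxiliary lemmas
-- ZMod 2 helpers
lemma zmod2_aab : ∀ p q : ZMod 2, p + p + q = q := by decide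
lemma zmod2_aba : ∀ p q : ZMod 2, p + q + p = q := by decide
lemma zmod2_abb : ∀ p q : ZMod 2, p + q + q = p := by decide
lemma zmod2_three : ∀ p : ZMod 2, p + p + p = p := by decide
lemma zmod2_ne_ne {u v w : ZMod 2} (h1 : u ≠ w) (h2 : v ≠ w) : u = v := by
  revert h1 h2; revert u v w; decide
lemma zmod2_flip1 {u v w : ZMod 2} (hw : w = u) (h : u ≠ v) : ¬ w + u + v = u := by
  revert hw h; revert u v w; decide
lemma zmod2_flip2 {u v w : ZMod 2} (hw : ¬ w = u) (h : u ≠ v) : w + u + v = u := by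
  revert hw h; revert u v w; decide

lemma finsupp_deg_le_one {m : ℕ} (d : Fin m →₀ ℕ) (h : (d.sum fun _ e => e) ≤ 1) :
    d = 0 ∨ ∃ j, d = Finsupp.single j 1 := by
  by_cases hd : d = 0
  · exact Or.inl hd
  · right
    obtain ⟨j, hj⟩ := Finsupp.support_nonempty_iff.mpr hd
    have hsum : ∑ i ∈ d.support, d i ≤ 1 := h
    have h1 : ∀ i ∈ d.support, 1 ≤ d i := fun i hi =>
      Nat.one_le_iff_ne_zero.mpr (Finsupp.mem_support_iff.mp hi)
    have hcardle : d.support.card ≤ ∑ i ∈ d.support, d i := by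
      calc d.support.card = ∑ _i ∈ d.support, 1 := by simp
        _ ≤ ∑ i ∈ d.support, d i := Finset.sum_le_sum h1
    have hcard : d.support.card = 1 := le_antisymm (hcardle.trans hsum)
      (Finset.card_pos.mpr ⟨j, hj⟩)
    obtain ⟨k, hk⟩ := Finset.card_eq_one.mp hcard
    refine ⟨k, ?_⟩
    have hmem : k ∈ d.support := hk ▸ Finset.mem_singleton_self k
    have hdk : d k = 1 := by
      have hsk : ∑ i ∈ d.support, d i = d k := by rw [hk, Finset.sum_singleton]
      have := h1 k hmem
      omega
    ext i
    by_cases hik : i = k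
    · subst hik; simp [hdk]
    · have : i ∉ d.support := by rw [hk]; simp [hik]
      rw [Finsupp.notMem_support_iff.mp this, Finsupp.single_eq_of_ne' (Ne.symm hik)]

lemma eval_three {m : ℕ} (p : MvPolynomial (Fin m) (ZMod 2)) (hp : p.totalDegree ≤ 1)
    (x y z : Fin m → ZMod 2) :
    MvPolynomial.eval (x + y + z) p
      = MvPolynomial.eval x p + MvPolynomial.eval y p + MvPolynomial.eval z p := by
  simp only [MvPolynomial.eval_eq]
  rw [← Finset.sum_add_distrib, ← Finset.sum_add_distrib]
  refine Finset.sum_congr rfl fun d hd => ?_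
  have hdeg : (d.sum fun _ e => e) ≤ 1 := le_trans (MvPolynomial.le_totalDegree hd) hp
  rcases finsupp_deg_le_one d hdeg with h0 | ⟨j, hj⟩
  · subst h0
    simp only [Finsupp.support_zero, Finset.prod_empty, mul_one]
    exact (zmod2_three _).symm
  · subst hj
    have hprod : ∀ w : Fin m → ZMod 2,
        (∏ i ∈ (Finsupp.single j 1).support, w i ^ (Finsupp.single j 1) i) = w j := by
      intro w
      rw [Finsupp.support_single_ne_zero j one_ne_zero, Finset.prod_singleton,
        Finsupp.single_eq_same, pow_one]
    rw [hprod, hprod, hprod, hprod]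
    simp only [Pi.add_apply]
    ring

lemma key_singleton (q0 q1 : ℝ) (h1 : 0 ≤ q1) (h01 : q1 ≤ q0) {n : ℕ}
    (J : Finset (Fin n)) (A : Finset (Fin n → ZMod 2)) (hne : A.Nonempty)
    (hsing : ∀ a ∈ A, ∀ b ∈ A, a = b) :
    A.card = 1 ∧
      ∑ y ∈ A, ∏ i ∈ J, (if y i = 1 then q1 else q0) ≤ q0 ^ J.card := by
  obtain ⟨a, ha⟩ := hne
  have hAa : A = {a} := Finset.eq_singleton_iff_unique_mem.mpr ⟨ha, fun b hb => hsing b hb a ha⟩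
  constructor
  · simp [hAa]
  · rw [hAa, Finset.sum_singleton, ← Finset.prod_const]
    refine Finset.prod_le_prod (fun i _ => ?_) (fun i _ => ?_)
    · split <;> [exact h1; exact le_trans h1 h01]
    · split <;> [exact h01; exact le_rfl]

lemma key_lemma (q0 q1 : ℝ) (h1 : 0 ≤ q1) (h01 : q1 ≤ q0) {n : ℕ} :
    ∀ (N : ℕ) (J : Finset (Fin n)) (A : Finset ((Fin n) → ZMod 2)),
      J.card ≤ N → A.Nonempty →
      (∀ a ∈ A, ∀ b ∈ A, ∀ c ∈ A, a + b + c ∈ A) →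
      (∀ a ∈ A, ∀ b ∈ A, ∀ i, i ∉ J → a i = b i) →
      ∃ s, s ≤ J.card ∧ A.card = 2 ^ s ∧
        ∑ y ∈ A, ∏ i ∈ J, (if y i = 1 then q1 else q0)
          ≤ (q0 + q1) ^ s * q0 ^ (J.card - s) := by
  have hq0 : 0 ≤ q0 := le_trans h1 h01
  intro N
  induction N with
  | zero =>
    intro J A hJ hne hmem3 hconst
    have hJe : J = ∅ := Finset.card_eq_zero.mp (Nat.le_zero.mp hJ)
    have hsing : ∀ a ∈ A, ∀ b ∈ A, a = b := by
      intro a ha b hb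
      funext i
      exact hconst a ha b hb i (by simp [hJe])
    obtain ⟨hc, hs⟩ := key_singleton q0 q1 h1 h01 J A hne hsing
    exact ⟨0, Nat.zero_le _, by simpa using hc, by simpa using hs⟩
  | succ N ih =>
    intro J A hJ hne hmem3 hconst
    by_cases hsing : ∀ a ∈ A, ∀ b ∈ A, a = b
    · obtain ⟨hc, hs⟩ := key_singleton q0 q1 h1 h01 J A hne hsing
      exact ⟨0, Nat.zero_le _, by simpa using hc, by simpa using hs⟩
    · push_neg at hsing
      obtain ⟨a, ha, b, hb, hab⟩ := hsing
      have hex : ∃ i, a i ≠ b i := by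
        by_contra h; push_neg at h; exact hab (funext h)
      obtain ⟨i, hi⟩ := hex
      have hiJ : i ∈ J := by
        by_contra hij; exact hi (hconst a ha b hb i hij)
      set A0 := A.filter (fun y => y i = a i) with hA0
      set A1 := A.filter (fun y => ¬ y i = a i) with hA1
      have haA0 : a ∈ A0 := Finset.mem_filter.mpr ⟨ha, rfl⟩
      have hbA1 : b ∈ A1 := Finset.mem_filter.mpr ⟨hb, fun h => hi (Eq.symm h)⟩
      -- the involution y ↦ y + a + b
      have hginv : ∀ y : Fin n → ZMod 2, y + a + b + a + b = y := by
        intro y; funext k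
        simp only [Pi.add_apply]
        rw [show y k + a k + b k + a k + b k = y k + (a k + b k) + (a k + b k) by ring]
        exact zmod2_abb _ _
      have hg01 : ∀ y ∈ A0, y + a + b ∈ A1 := by
        intro y hy
        obtain ⟨hyA, hyi⟩ := Finset.mem_filter.mp hy
        refine Finset.mem_filter.mpr ⟨hmem3 y hyA a ha b hb, ?_⟩
        simp only [Pi.add_apply]
        exact zmod2_flip1 hyi hi
      have hg10 : ∀ y ∈ A1, y + a + b ∈ A0 := by
        intro y hy
        obtain ⟨hyA, hyi⟩ := Finset.mem_filter.mp hy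
        refine Finset.mem_filter.mpr ⟨hmem3 y hyA a ha b hb, ?_⟩
        simp only [Pi.add_apply]
        exact zmod2_flip2 hyi hi
      have hcard01 : A0.card = A1.card := by
        refine Finset.card_bij' (fun y _ => y + a + b) (fun y _ => y + a + b)
          (fun y hy => hg01 y hy) (fun y hy => hg10 y hy) ?_ ?_
        · intro y _; exact hginv y
        · intro y _; exact hginv y
      -- apply IH to the two slices with J.erase i
      have hJc : (J.erase i).card = J.card - 1 := Finset.card_erase_of_mem hiJ
      have hJpos : 1 ≤ J.card := Finset.card_pos.mpr ⟨i, hiJ⟩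
      have hJe : (J.erase i).card ≤ N := by omega
      have hconst' : ∀ (B : Finset (Fin n → ZMod 2)), B ⊆ A →
          (∀ x ∈ B, ∀ y ∈ B, x i = y i) →
          (∀ x ∈ B, ∀ y ∈ B, ∀ k, k ∉ J.erase i → x k = y k) := by
        intro B hBA hBi x hx y hy k hk
        by_cases hki : k = i
        · subst hki; exact hBi x hx y hy
        · have : k ∉ J := fun hkJ => hk (Finset.mem_erase.mpr ⟨hki, hkJ⟩)
          exact hconst x (hBA hx) y (hBA hy) k this
      have hmem3' : ∀ (B : Finset (Fin n → ZMod 2)), (∀ y ∈ B, y ∈ A ∧ (y i = a i ↔ a i = a i → y i = a i)) → True := fun _ _ => trivial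
      have hmem30 : ∀ x ∈ A0, ∀ y ∈ A0, ∀ z ∈ A0, x + y + z ∈ A0 := by
        intro x hx y hy z hz
        obtain ⟨hxA, hxi⟩ := Finset.mem_filter.mp hx
        obtain ⟨hyA, hyi⟩ := Finset.mem_filter.mp hy
        obtain ⟨hzA, hzi⟩ := Finset.mem_filter.mp hz
        refine Finset.mem_filter.mpr ⟨hmem3 x hxA y hyA z hzA, ?_⟩
        simp only [Pi.add_apply, hxi, hyi, hzi]
        exact zmod2_three _
      have hmem31 : ∀ x ∈ A1, ∀ y ∈ A1, ∀ z ∈ A1, x + y + z ∈ A1 := by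
        intro x hx y hy z hz
        obtain ⟨hxA, hxi⟩ := Finset.mem_filter.mp hx
        obtain ⟨hyA, hyi⟩ := Finset.mem_filter.mp hy
        obtain ⟨hzA, hzi⟩ := Finset.mem_filter.mp hz
        refine Finset.mem_filter.mpr ⟨hmem3 x hxA y hyA z hzA, ?_⟩
        simp only [Pi.add_apply]
        have hxb : x i = b i := zmod2_ne_ne hxi (Ne.symm hi)
        have hyb : y i = b i := zmod2_ne_ne hyi (Ne.symm hi)
        have hzb : z i = b i := zmod2_ne_ne hzi (Ne.symm hi)
        rw [hxb, hyb, hzb, zmod2_three]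
        exact fun h => hi (Eq.symm h)
      obtain ⟨s0, hs0le, hs0card, hs0sum⟩ := ih (J.erase i) A0 hJe ⟨a, haA0⟩ hmem30
        (hconst' A0 (Finset.filter_subset _ _) (fun x hx y hy => by
          rw [(Finset.mem_filter.mp hx).2, (Finset.mem_filter.mp hy).2]))
      obtain ⟨s1, hs1le, hs1card, hs1sum⟩ := ih (J.erase i) A1 hJe ⟨b, hbA1⟩ hmem31
        (hconst' A1 (Finset.filter_subset _ _) (fun x hx y hy =>
          zmod2_ne_ne (Finset.mem_filter.mp hx).2 (Finset.mem_filter.mp hy).2))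
      have h2pow : (2:ℕ) ^ s0 = 2 ^ s1 := by rw [← hs0card, ← hs1card]; exact hcard01
      have hs01 : s0 = s1 := Nat.pow_right_injective (le_refl 2) h2pow
      have hAsplit : A0.card + A1.card = A.card :=
        Finset.card_filter_add_card_filter_not _
      have hAcard : A.card = 2 ^ (s0 + 1) := by
        rw [← hAsplit, hs0card, hs1card, ← hs01]; ring
      have hsum_split : ∑ y ∈ A, ∏ j ∈ J, (if y j = 1 then q1 else q0)
          = ∑ y ∈ A0, ∏ j ∈ J, (if y j = 1 then q1 else q0)
            + ∑ y ∈ A1, ∏ j ∈ J, (if y j = 1 then q1 else q0) :=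
        (Finset.sum_filter_add_sum_filter_not A _ _).symm
      have hfac0 : ∑ y ∈ A0, ∏ j ∈ J, (if y j = 1 then q1 else q0)
          = (if a i = 1 then q1 else q0)
            * ∑ y ∈ A0, ∏ j ∈ J.erase i, (if y j = 1 then q1 else q0) := by
        rw [Finset.mul_sum]
        refine Finset.sum_congr rfl fun y hy => ?_
        rw [← Finset.mul_prod_erase J _ hiJ, (Finset.mem_filter.mp hy).2]
      have hfac1 : ∑ y ∈ A1, ∏ j ∈ J, (if y j = 1 then q1 else q0)
          = (if b i = 1 then q1 else q0)
            * ∑ y ∈ A1, ∏ j ∈ J.erase i, (if y j = 1 then q1 else q0) := by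
        rw [Finset.mul_sum]
        refine Finset.sum_congr rfl fun y hy => ?_
        have hyb : y i = b i := zmod2_ne_ne (Finset.mem_filter.mp hy).2 (Ne.symm hi)
        rw [← Finset.mul_prod_erase J _ hiJ, hyb]
      have hqa : (0:ℝ) ≤ (if a i = 1 then q1 else q0) := by
        split <;> [exact h1; exact hq0]
      have hqb : (0:ℝ) ≤ (if b i = 1 then q1 else q0) := by
        split <;> [exact h1; exact hq0]
      have h01' : ¬ (0 : ZMod 2) = 1 := by decide
      have hqab : (if a i = 1 then q1 else q0) + (if b i = 1 then q1 else q0) = q0 + q1 := by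
        rcases (by decide : ∀ v : ZMod 2, v = 0 ∨ v = 1) (a i) with h | h <;>
          rcases (by decide : ∀ v : ZMod 2, v = 0 ∨ v = 1) (b i) with h' | h'
        · exact absurd (h.trans h'.symm) hi
        · rw [h, h', if_neg h01', if_pos rfl]
        · rw [h, h', if_pos rfl, if_neg h01']; ring
        · exact absurd (h.trans h'.symm) hi
      rw [← hs01] at hs1sum
      refine ⟨s0 + 1, by omega, hAcard, ?_⟩
      rw [hsum_split, hfac0, hfac1]
      have hexp : (J.erase i).card - s0 = J.card - (s0 + 1) := by omega
      calc (if a i = 1 then q1 else q0)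
            * ∑ y ∈ A0, ∏ j ∈ J.erase i, (if y j = 1 then q1 else q0)
          + (if b i = 1 then q1 else q0)
            * ∑ y ∈ A1, ∏ j ∈ J.erase i, (if y j = 1 then q1 else q0)
          ≤ (if a i = 1 then q1 else q0)
              * ((q0 + q1) ^ s0 * q0 ^ ((J.erase i).card - s0))
            + (if b i = 1 then q1 else q0)
              * ((q0 + q1) ^ s0 * q0 ^ ((J.erase i).card - s0)) :=
            add_le_add (mul_le_mul_of_nonneg_left hs0sum hqa)
              (mul_le_mul_of_nonneg_left hs1sum hqb)
        _ = (q0 + q1) ^ (s0 + 1) * q0 ^ (J.card - (s0 + 1)) := by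
            rw [← add_mul, hqab, hexp, pow_succ]; ring

lemma sqrt_pow_eq (x : ℝ) (hx : 0 ≤ x) (k : ℕ) :
    Real.sqrt (x ^ k) = Real.sqrt x ^ k := by
  induction k with
  | zero => simp
  | succ k ih => rw [pow_succ, pow_succ, Real.sqrt_mul (by positivity) x, ih]

lemma prod_ite_count {n : ℕ} (y : Fin n → ZMod 2) (u v : ℝ) :
    ∏ i, (if y i = 1 then u else v)
      = u ^ (Finset.univ.filter fun i => y i = 1).card
        * v ^ (n - (Finset.univ.filter fun i => y i = 1).card) := by
  rw [Finset.prod_ite, Finset.prod_const, Finset.prod_const]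
  congr 2
  have h := Finset.card_filter_add_card_filter_not
    (s := (univ : Finset (Fin n))) (p := fun i => y i = 1)
  rw [Finset.card_univ, Fintype.card_fin] at h
  omega

lemma ber13_nonneg {n : ℕ} (y : Fin n → ZMod 2) : 0 ≤ ber13 y := by
  unfold ber13; positivity

lemma ber13_prod {n : ℕ} (y : Fin n → ZMod 2) :
    ber13 y = ∏ i, (if y i = 1 then (1/3 : ℝ) else 2/3) := by
  rw [prod_ite_count]; rfl

lemma sqrt_ber13 {n : ℕ} (y : Fin n → ZMod 2) :
    Real.sqrt (ber13 y)
      = ∏ i, (if y i = 1 then Real.sqrt (1/3 : ℝ) else Real.sqrt (2/3)) := by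
  rw [prod_ite_count]
  unfold ber13
  rw [Real.sqrt_mul (by positivity), sqrt_pow_eq _ (by norm_num), sqrt_pow_eq _ (by norm_num)]

lemma zmod2_univ : (univ : Finset (ZMod 2)) = {0, 1} := by decide

lemma ber13_sum (n : ℕ) : ∑ y : Fin n → ZMod 2, ber13 y = 1 := by
  have h1 : ∑ y : Fin n → ZMod 2, ber13 y
      = ∑ y : Fin n → ZMod 2, ∏ i, (if y i = 1 then (1/3 : ℝ) else 2/3) :=
    Finset.sum_congr rfl fun y _ => ber13_prod y
  rw [h1]
  have h2 := Finset.prod_univ_sum (fun _ : Fin n => (univ : Finset (ZMod 2)))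
    (fun _ v => if v = 1 then (1/3 : ℝ) else 2/3)
  rw [Fintype.piFinset_univ] at h2
  rw [← h2]
  have h3 : ∀ _i : Fin n, ∑ v : ZMod 2, (if v = 1 then (1/3 : ℝ) else 2/3) = 1 := by
    intro i
    rw [zmod2_univ, Finset.sum_insert (by decide), Finset.sum_singleton]
    norm_num
  rw [Finset.prod_congr rfl fun i _ => h3 i, Finset.prod_const_one]

lemma distOf_nonneg {α β : Type*} [Fintype α] [DecidableEq β] (f : α → β) (y : β) :
    0 ≤ distOf f y := by
  unfold distOf; positivity

lemma distOf_sum {α β : Type*} [Fintype α] [Fintype β] [DecidableEq β] [Nonempty α]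
    (f : α → β) : ∑ y, distOf f y = 1 := by
  unfold distOf
  rw [← Finset.sum_div]
  have h : ∑ y : β, ((univ.filter fun x => f x = y).card : ℝ) = (Fintype.card α : ℝ) := by
    rw [← Nat.cast_sum]
    norm_cast
    exact (Finset.card_eq_sum_card_fiberwise (f := f) (t := univ)
      fun x _ => Finset.mem_univ _).symm
  rw [h, div_self (by positivity)]

lemma abs_sub_eq (a b : ℝ) : |a - b| = a + b - 2 * min a b := by
  rcases le_total a b with h | h
  · rw [abs_of_nonpos (by linarith), min_eq_left h]; ring
  · rw [abs_of_nonneg (by linarith), min_eq_right h]; ring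

lemma min_le_sqrt_mul {a b : ℝ} (ha : 0 ≤ a) (hb : 0 ≤ b) :
    min a b ≤ Real.sqrt a * Real.sqrt b := by
  rw [← Real.sqrt_mul ha]
  have h1 : min a b * min a b ≤ a * b :=
    mul_le_mul (min_le_left a b) (min_le_right a b) (le_min ha hb) ha
  calc min a b = Real.sqrt (min a b * min a b) := (Real.sqrt_mul_self (le_min ha hb)).symm
    _ ≤ Real.sqrt (a * b) := Real.sqrt_le_sqrt h1

lemma numeric_bound :
    (Real.sqrt (2/3) + Real.sqrt (1/3)) / Real.sqrt 2 ≤ (2:ℝ) ^ (-(1/50) : ℝ) := by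
  have s23 : Real.sqrt (2/3) ≤ 0.8166 := by
    rw [show (0.8166:ℝ) = Real.sqrt (0.8166^2) from (Real.sqrt_sq (by norm_num)).symm]
    exact Real.sqrt_le_sqrt (by norm_num)
  have s13 : Real.sqrt (1/3) ≤ 0.5774 := by
    rw [show (0.5774:ℝ) = Real.sqrt (0.5774^2) from (Real.sqrt_sq (by norm_num)).symm]
    exact Real.sqrt_le_sqrt (by norm_num)
  have s2 : (1.4142:ℝ) ≤ Real.sqrt 2 :=
    (Real.le_sqrt (by norm_num) (by norm_num)).mpr (by norm_num)
  have hD : ((1.0141:ℝ))⁻¹ ≤ (2:ℝ) ^ (-(1/50) : ℝ) := by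
    rw [show (-(1/50) : ℝ) = -(1/50 : ℝ) from rfl, Real.rpow_neg (by norm_num)]
    have hb : (2:ℝ) ^ ((1/50 : ℝ)) ≤ 1.0141 := by
      have h2 : (2:ℝ) ≤ (1.0141:ℝ) ^ (50:ℕ) := by norm_num
      calc (2:ℝ) ^ ((1/50):ℝ) ≤ ((1.0141:ℝ) ^ (50:ℕ)) ^ ((1/50):ℝ) :=
            Real.rpow_le_rpow (by norm_num) h2 (by norm_num)
        _ = 1.0141 := by
            rw [← Real.rpow_natCast (1.0141:ℝ) 50, ← Real.rpow_mul (by norm_num)]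
            norm_num
    exact inv_anti₀ (Real.rpow_pos_of_pos (by norm_num) _) hb
  calc (Real.sqrt (2/3) + Real.sqrt (1/3)) / Real.sqrt 2
      ≤ (0.8166 + 0.5774) / 1.4142 :=
        div_le_div₀ (by norm_num) (add_le_add s23 s13) (by norm_num) s2
    _ ≤ (1.0141:ℝ)⁻¹ := by norm_num
    _ ≤ (2:ℝ) ^ (-(1/50) : ℝ) := hD

lemma q0_le_g :
    Real.sqrt (2/3) ≤ (Real.sqrt (2/3) + Real.sqrt (1/3)) / Real.sqrt 2 := by
  have s2pos : (0:ℝ) < Real.sqrt 2 := Real.sqrt_pos.mpr (by norm_num)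
  rw [le_div_iff₀ s2pos]
  have h43 : Real.sqrt (2/3) * Real.sqrt 2 = Real.sqrt 4 * Real.sqrt (1/3) := by
    rw [← Real.sqrt_mul (by norm_num : (0:ℝ) ≤ 2/3), ← Real.sqrt_mul (by norm_num : (0:ℝ) ≤ 4)]
    norm_num
  have h4 : Real.sqrt 4 = 2 := by
    rw [show (4:ℝ) = 2^2 by norm_num, Real.sqrt_sq (by norm_num)]
  rw [h43, h4, two_mul]
  exact add_le_add (Real.sqrt_le_sqrt (by norm_num)) le_rfl

/-- Degree-1 distributions are `1 - C·2^{-c·n}`-far from `Ber(1/3)^{⊗n}`. -/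
theorem degree_one_lower_bound :
    ∃ c > (0:ℝ), ∃ C > (0:ℝ), ∀ m n : ℕ, 0 < m → 0 < n →
      ∀ L : Fin n → (Fin m → ZMod 2) → ZMod 2, (∀ i, DegLE 1 (L i)) →
        tvDist (outDist L) ber13 ≥ 1 - C * (2:ℝ) ^ (-(c * (n:ℝ))) := by
  refine ⟨1/50, by norm_num, 1, by norm_num, ?_⟩
  intro m n hm hn L hL
  classical
  set q0 := Real.sqrt (2/3) with hq0def
  set q1 := Real.sqrt (1/3) with hq1def
  have hq1 : (0:ℝ) ≤ q1 := Real.sqrt_nonneg _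
  have hq01 : q1 ≤ q0 := Real.sqrt_le_sqrt (by norm_num)
  have hq0 : (0:ℝ) ≤ q0 := le_trans hq1 hq01
  set f : (Fin m → ZMod 2) → (Fin n → ZMod 2) := fun x i => L i x with hfdef
  have hout : outDist L = distOf f := rfl
  have hf3 : ∀ x y z, f (x + y + z) = f x + f y + f z := by
    intro x y z
    funext i
    simp only [Pi.add_apply, hfdef]
    obtain ⟨p, hp, hpe⟩ := hL i
    simp only [← hpe]
    exact eval_three p hp x y z
  set A := Finset.image f univ with hAdef
  have hAne : A.Nonempty := ⟨f (fun _ => 0), Finset.mem_image_of_mem f (mem_univ _)⟩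
  have hmem3 : ∀ a ∈ A, ∀ b ∈ A, ∀ c ∈ A, a + b + c ∈ A := by
    intro a ha b hb c hc
    obtain ⟨x, -, rfl⟩ := Finset.mem_image.mp ha
    obtain ⟨y, -, rfl⟩ := Finset.mem_image.mp hb
    obtain ⟨z, -, rfl⟩ := Finset.mem_image.mp hc
    exact Finset.mem_image.mpr ⟨x + y + z, mem_univ _, hf3 x y z⟩
  obtain ⟨s, hsle, hscard, hssum⟩ := key_lemma q0 q1 hq1 hq01 n univ A
    (by simp) hAne hmem3 (fun a _ b _ i hi => absurd (mem_univ i) hi)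
  rw [card_univ, Fintype.card_fin] at hsle hssum
  -- fibers
  have hfib : ∀ u ∈ A, ∀ v ∈ A,
      (univ.filter fun x => f x = u).card = (univ.filter fun x => f x = v).card := by
    intro u hu v hv
    obtain ⟨xu, -, hxu⟩ := Finset.mem_image.mp hu
    obtain ⟨xv, -, hxv⟩ := Finset.mem_image.mp hv
    refine Finset.card_bij' (fun x _ => x + xu + xv) (fun x _ => x + xu + xv) ?_ ?_ ?_ ?_
    · intro x hx
      have hfx : f x = u := (Finset.mem_filter.mp hx).2
      refine Finset.mem_filter.mpr ⟨mem_univ _, ?_⟩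
      rw [hf3, hfx, hxu, hxv]
      funext i; simp only [Pi.add_apply]; exact zmod2_aab _ _
    · intro x hx
      have hfx : f x = v := (Finset.mem_filter.mp hx).2
      refine Finset.mem_filter.mpr ⟨mem_univ _, ?_⟩
      rw [hf3, hfx, hxu, hxv]
      funext i; simp only [Pi.add_apply]
      exact zmod2_aba _ _
    · intro x _
      funext i; simp only [Pi.add_apply]
      rw [show x i + xu i + xv i + xu i + xv i = x i + (xu i + xv i) + (xu i + xv i) by ring]
      exact zmod2_abb _ _
    · intro x _
      funext i; simp only [Pi.add_apply]
      rw [show x i + xu i + xv i + xu i + xv i = x i + (xu i + xv i) + (xu i + xv i) by ring]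
      exact zmod2_abb _ _
  have hcardfun : Fintype.card (Fin m → ZMod 2) = 2 ^ m := by
    rw [Fintype.card_fun, ZMod.card, Fintype.card_fin]
  have hAmu : ∀ y ∈ A, distOf f y = ((2:ℝ) ^ s)⁻¹ := by
    intro y hy
    have h1 : ∑ v ∈ A, (univ.filter fun x => f x = v).card
        = Fintype.card (Fin m → ZMod 2) := by
      rw [← Finset.card_univ]
      exact (Finset.card_eq_sum_card_fiberwise
        fun x _ => Finset.mem_image_of_mem f (mem_univ x)).symm
    have h2 : ∑ v ∈ A, (univ.filter fun x => f x = v).card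
        = A.card * (univ.filter fun x => f x = y).card := by
      rw [Finset.sum_congr rfl fun v hv => hfib v hv y hy, Finset.sum_const, smul_eq_mul]
    have h3 : 2 ^ s * (univ.filter fun x => f x = y).card = 2 ^ m := by
      rw [← hscard, ← h2, h1, hcardfun]
    unfold distOf
    rw [hcardfun]
    have h3' : ((2:ℝ) ^ s) * ((univ.filter fun x => f x = y).card : ℝ) = (2:ℝ) ^ m := by
      exact_mod_cast congrArg (fun t : ℕ => (t : ℝ)) h3
    push_cast
    field_simp
    linarith [h3']
  have hmu0 : ∀ y, y ∉ A → distOf f y = 0 := by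
    intro y hy
    unfold distOf
    have he : (univ.filter fun x => f x = y) = ∅ := by
      rw [Finset.filter_eq_empty_iff]
      exact fun x _ h => hy (h ▸ Finset.mem_image_of_mem f (mem_univ x))
    rw [he]; simp
  -- TV identity
  have hμsum : ∑ y : Fin n → ZMod 2, outDist L y = 1 := by rw [hout]; exact distOf_sum f
  have htv : tvDist (outDist L) ber13
      = 1 - ∑ y : Fin n → ZMod 2, min (outDist L y) (ber13 y) := by
    unfold tvDist
    rw [Finset.sum_congr rfl fun y _ => abs_sub_eq (outDist L y) (ber13 y)]
    rw [Finset.sum_sub_distrib, Finset.sum_add_distrib, ← Finset.mul_sum, hμsum, ber13_sum]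
    ring
  rw [htv, ge_iff_le]
  have hbound : ∑ y : Fin n → ZMod 2, min (outDist L y) (ber13 y)
      ≤ (2:ℝ) ^ (-(1/50 * (n:ℝ))) := by
    set g := (q0 + q1) / Real.sqrt 2 with hgdef
    have hgnn : 0 ≤ g := div_nonneg (by linarith) (Real.sqrt_nonneg _)
    have hstep1 : ∑ y : Fin n → ZMod 2, min (outDist L y) (ber13 y)
        = ∑ y ∈ A, min (outDist L y) (ber13 y) := by
      symm
      apply Finset.sum_subset (Finset.subset_univ A)
      intro y _ hy
      rw [hout, hmu0 y hy]
      exact min_eq_left (ber13_nonneg y)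
    have hstep2 : ∀ y ∈ A, min (outDist L y) (ber13 y)
        ≤ ((Real.sqrt 2)⁻¹) ^ s * ∏ i, (if y i = 1 then q1 else q0) := by
      intro y hy
      have h1 : min (outDist L y) (ber13 y)
          ≤ Real.sqrt (outDist L y) * Real.sqrt (ber13 y) := by
        rw [hout]
        exact min_le_sqrt_mul (distOf_nonneg f y) (ber13_nonneg y)
      have h2 : Real.sqrt (outDist L y) = ((Real.sqrt 2)⁻¹) ^ s := by
        rw [hout, hAmu y hy, Real.sqrt_inv, sqrt_pow_eq 2 (by norm_num), inv_pow]
      have h3 : Real.sqrt (ber13 y) = ∏ i, (if y i = 1 then q1 else q0) := sqrt_ber13 y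
      rw [h2, h3] at h1
      exact h1
    calc ∑ y : Fin n → ZMod 2, min (outDist L y) (ber13 y)
        = ∑ y ∈ A, min (outDist L y) (ber13 y) := hstep1
      _ ≤ ∑ y ∈ A, ((Real.sqrt 2)⁻¹) ^ s * ∏ i, (if y i = 1 then q1 else q0) :=
          Finset.sum_le_sum hstep2
      _ = ((Real.sqrt 2)⁻¹) ^ s * ∑ y ∈ A, ∏ i, (if y i = 1 then q1 else q0) :=
          (Finset.mul_sum _ _ _).symm
      _ ≤ ((Real.sqrt 2)⁻¹) ^ s * ((q0 + q1) ^ s * q0 ^ (n - s)) := by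
          refine mul_le_mul_of_nonneg_left ?_ (by positivity)
          exact hssum
      _ = g ^ s * q0 ^ (n - s) := by
          rw [hgdef, div_pow, inv_pow]
          field_simp
      _ ≤ g ^ s * g ^ (n - s) := by
          refine mul_le_mul_of_nonneg_left ?_ (by positivity)
          exact pow_le_pow_left₀ hq0 q0_le_g _
      _ = g ^ n := by rw [← pow_add]; congr 1; omega
      _ ≤ ((2:ℝ) ^ (-(1/50):ℝ)) ^ n := pow_le_pow_left₀ hgnn numeric_bound n
      _ = (2:ℝ) ^ (-(1/50 * (n:ℝ))) := by
          rw [← Real.rpow_natCast ((2:ℝ) ^ (-(1/50):ℝ)) n, ← Real.rpow_mul (by norm_num)]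
          congr 1
          ring
  linarith [hbound]
end

section
/- For every integer r ≥ 1 and every m, every function P : 𝔽₂^m → 𝔽₂ with rank₂(P) ≤ r satisfies |Pr_{X ~ Unif(𝔽₂^m)}[P(X) = 1] − 1/3| ≥ (1/12)·2^{−((r+2)·2^r + r)}. -/
set_option maxHeartbeats 1000000


open Finset

namespace BRG

def chi : ZMod 2 → ℤ := fun t => if t = 0 then 1 else -1

lemma chi_add : ∀ s t : ZMod 2, chi (s + t) = chi s * chi t := by decide
lemma chi_one_flip : ∀ t : ZMod 2, chi (t + 1) = - chi t := by decide
lemma chi_abs : ∀ t : ZMod 2, |chi t| = 1 := by decide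
lemma chi_zero : chi 0 = 1 := by decide
lemma zmod2_ne_zero : ∀ t : ZMod 2, t ≠ 0 → t = 1 := by decide
lemma zmod2_ne_one : ∀ t : ZMod 2, t ≠ 1 → t = 0 := by decide
lemma zmod2_add_self : ∀ t : ZMod 2, t + t = 0 := by decide
lemma zmod2_add_eq_zero : ∀ a b : ZMod 2, a + b = 0 → b = a := by decide

lemma zmod2_pow {z : ZMod 2} {n : ℕ} (hn : n ≠ 0) : z ^ n = z := by
  have h2 : ∀ t : ZMod 2, t = 0 ∨ t = 1 := by decide
  rcases h2 z with h | h <;> subst h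
  · simp [zero_pow hn]
  · simp

def dot {k : ℕ} (a y : Fin k → ZMod 2) : ZMod 2 := ∑ j, a j * y j

lemma dot_comm {k : ℕ} (a y : Fin k → ZMod 2) : dot a y = dot y a :=
  Finset.sum_congr rfl fun j _ => mul_comm _ _

lemma dot_add_right {k : ℕ} (a y v : Fin k → ZMod 2) :
    dot a (y + v) = dot a y + dot a v := by
  unfold dot
  rw [← Finset.sum_add_distrib]
  exact Finset.sum_congr rfl fun j _ => by simp [mul_add]

lemma dot_add_left {k : ℕ} (a b y : Fin k → ZMod 2) :
    dot (a + b) y = dot a y + dot b y := by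
  rw [dot_comm, dot_add_right, dot_comm y a, dot_comm y b]

lemma dot_zero_right {k : ℕ} (a : Fin k → ZMod 2) : dot a 0 = 0 := by
  simp [dot]

lemma dot_zero_left {k : ℕ} (y : Fin k → ZMod 2) : dot 0 y = 0 := by
  simp [dot]

lemma dot_single {k : ℕ} (j0 : Fin k) (c : Fin k → ZMod 2) :
    dot (Pi.single j0 1) c = c j0 := by
  unfold dot
  rw [Finset.sum_eq_single j0]
  · simp
  · intro b _ hb; simp [Pi.single_eq_of_ne hb]
  · simp

lemma pi_add_eq_zero_iff {k : ℕ} (y v : Fin k → ZMod 2) : y + v = 0 ↔ v = y := by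
  constructor
  · intro h; funext i
    exact zmod2_add_eq_zero _ _ (congrFun h i)
  · rintro rfl; funext i; exact zmod2_add_self _

lemma card_V (m : ℕ) : Fintype.card (Fin m → ZMod 2) = 2 ^ m := by
  rw [Fintype.card_fun, ZMod.card, Fintype.card_fin]

lemma orth {k : ℕ} (c : Fin k → ZMod 2) :
    (∑ a : Fin k → ZMod 2, chi (dot a c)) = if c = 0 then (2 ^ k : ℤ) else 0 := by
  by_cases hc : c = 0
  · subst hc
    simp only [if_pos rfl, dot_zero_right, chi_zero]
    rw [Finset.sum_const, Finset.card_univ, card_V]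
    simp
  · rw [if_neg hc]
    obtain ⟨j0, hj0⟩ : ∃ j0, c j0 ≠ 0 := by
      by_contra h; push_neg at h; exact hc (funext fun i => h i)
    have hc1 : c j0 = 1 := zmod2_ne_zero _ hj0
    set e : Fin k → ZMod 2 := Pi.single j0 1 with he
    have hdote : dot e c = 1 := by rw [he, dot_single, hc1]
    have h1 : ∑ a : Fin k → ZMod 2, chi (dot (a + e) c) = ∑ a : Fin k → ZMod 2, chi (dot a c) :=
      (Equiv.addRight e).bijective.sum_comp (fun a => chi (dot a c))
    have h2 : ∑ a : Fin k → ZMod 2, chi (dot (a + e) c)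
        = ∑ a : Fin k → ZMod 2, - chi (dot a c) := by
      refine Finset.sum_congr rfl fun a _ => ?_
      rw [dot_add_left, hdote, chi_one_flip]
    rw [h2, Finset.sum_neg_distrib] at h1
    linarith [h1]


lemma cube0 : (1+1+1+1+1+1+1+1 : ZMod 2) = 0 := by decide

lemma cube1 : ∀ a u v w : ZMod 2,
    a + (a+u) + (a+v) + (a+w) + (a+u+v) + (a+u+w) + (a+v+w) + (a+u+v+w) = 0 := by decide

lemma cube2 : ∀ a b u1 u2 v1 v2 w1 w2 : ZMod 2,
    a*b + (a+u1)*(b+u2) + (a+v1)*(b+v2) + (a+w1)*(b+w2) + (a+u1+v1)*(b+u2+v2)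
    + (a+u1+w1)*(b+u2+w2) + (a+v1+w1)*(b+v2+w2) + (a+u1+v1+w1)*(b+u2+v2+w2) = 0 := by decide

lemma cube_mono {k : ℕ} (t : Finset (Fin k)) (ht : t.card ≤ 2) (x u v w : Fin k → ZMod 2) :
    (∏ i ∈ t, x i) + (∏ i ∈ t, (x+u) i) + (∏ i ∈ t, (x+v) i) + (∏ i ∈ t, (x+w) i)
    + (∏ i ∈ t, (x+u+v) i) + (∏ i ∈ t, (x+u+w) i) + (∏ i ∈ t, (x+v+w) i)
    + (∏ i ∈ t, (x+u+v+w) i) = 0 := by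
  interval_cases h : t.card
  · rw [Finset.card_eq_zero] at h; subst h
    simpa using cube0
  · rw [Finset.card_eq_one] at h; obtain ⟨i, rfl⟩ := h
    simp only [Finset.prod_singleton, Pi.add_apply]
    linear_combination cube1 (x i) (u i) (v i) (w i)
  · rw [Finset.card_eq_two] at h; obtain ⟨i, j, hij, rfl⟩ := h
    simp only [Finset.prod_pair hij, Pi.add_apply]
    linear_combination cube2 (x i) (x j) (u i) (u j) (v i) (v j) (w i) (w j)

lemma degle_cube {m' : ℕ} {f : (Fin m' → ZMod 2) → ZMod 2} (hf : DegLE 2 f) :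
    ∀ x u v w : Fin m' → ZMod 2,
      f x + f (x+u) + f (x+v) + f (x+w) + f (x+u+v) + f (x+u+w) + f (x+v+w) + f (x+u+v+w) = 0 := by
  obtain ⟨p, hdeg, hev⟩ := hf
  intro x u v w
  have hev8 : ∀ z : Fin m' → ZMod 2,
      f z = ∑ d ∈ p.support, MvPolynomial.coeff d p * ∏ i ∈ d.support, z i := by
    intro z
    rw [← hev z, MvPolynomial.eval_eq]
    refine Finset.sum_congr rfl fun d _ => ?_
    congr 1
    exact Finset.prod_congr rfl fun i hi => zmod2_pow (Finsupp.mem_support_iff.mp hi)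
  simp only [hev8]
  rw [← Finset.sum_add_distrib, ← Finset.sum_add_distrib, ← Finset.sum_add_distrib,
    ← Finset.sum_add_distrib, ← Finset.sum_add_distrib, ← Finset.sum_add_distrib,
    ← Finset.sum_add_distrib]
  refine Finset.sum_eq_zero fun d hd => ?_
  have hcard : d.support.card ≤ 2 := by
    have h1 : (d.sum fun _ e => e) ≤ 2 := le_trans (MvPolynomial.le_totalDegree hd) hdeg
    have h2 : d.support.card ≤ d.sum fun _ e => e := by
      rw [Finsupp.sum]
      calc d.support.card = ∑ _i ∈ d.support, 1 := by simp
        _ ≤ ∑ i ∈ d.support, d i :=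
            Finset.sum_le_sum fun i hi =>
              Nat.one_le_iff_ne_zero.mpr (Finsupp.mem_support_iff.mp hi)
    omega
  have hc := cube_mono d.support hcard x u v w
  calc MvPolynomial.coeff d p * ∏ i ∈ d.support, x i
        + MvPolynomial.coeff d p * ∏ i ∈ d.support, (x+u) i
        + MvPolynomial.coeff d p * ∏ i ∈ d.support, (x+v) i
        + MvPolynomial.coeff d p * ∏ i ∈ d.support, (x+w) i
        + MvPolynomial.coeff d p * ∏ i ∈ d.support, (x+u+v) i
        + MvPolynomial.coeff d p * ∏ i ∈ d.support, (x+u+w) i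
        + MvPolynomial.coeff d p * ∏ i ∈ d.support, (x+v+w) i
        + MvPolynomial.coeff d p * ∏ i ∈ d.support, (x+u+v+w) i
      = MvPolynomial.coeff d p * ((∏ i ∈ d.support, x i) + (∏ i ∈ d.support, (x+u) i)
        + (∏ i ∈ d.support, (x+v) i) + (∏ i ∈ d.support, (x+w) i)
        + (∏ i ∈ d.support, (x+u+v) i) + (∏ i ∈ d.support, (x+u+w) i)
        + (∏ i ∈ d.support, (x+v+w) i) + (∏ i ∈ d.support, (x+u+v+w) i)) := by ring
    _ = 0 := by rw [hc, mul_zero]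

lemma degle_sum {m' k : ℕ} (a : Fin k → ZMod 2) (Q : Fin k → (Fin m' → ZMod 2) → ZMod 2)
    (hQ : ∀ j, DegLE 2 (Q j)) :
    DegLE 2 (fun x => ∑ j, a j * Q j x) := by
  classical
  have H : ∀ s : Finset (Fin k), DegLE 2 (fun x => ∑ j ∈ s, a j * Q j x) := by
    intro s
    induction s using Finset.induction_on with
    | empty => exact ⟨0, by simp, by simp⟩
    | @insert j s hj ih =>
      obtain ⟨p, hp, hpe⟩ := ih
      obtain ⟨q, hq, hqe⟩ := hQ j
      refine ⟨MvPolynomial.C (a j) * q + p, ?_, ?_⟩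
      · refine le_trans (MvPolynomial.totalDegree_add _ _) ?_
        refine max_le (le_trans (MvPolynomial.totalDegree_mul _ _) ?_) hp
        simpa using hq
      · intro x
        simp only [Finset.sum_insert hj]
        simp [hpe x, hqe x]
  exact H Finset.univ


-- decide helpers
lemma h_split : ∀ a b c d : ZMod 2, a + b = (b + a + c + d) + (c + d) := by decide
lemma h_zero : ∀ b c d : ZMod 2, (b + c + d) + b + c + d = 0 := by decide
lemma h_ne : ∀ a b c d : ZMod 2, a ≠ b + c + d → a + b + c + d = 1 := by decide
lemma h_add8 : ∀ A B C D E F G H : ZMod 2, A + B + C + D + E + F + G + H = 0 →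
    H + E + D + A = (F + B + D + A) + (G + C + D + A) := by decide
lemma h_psi : ∀ b c d : ZMod 2, (b + c + d) + d = (b + d) + (c + d) := by decide
lemma h_flip2 : ∀ a : ZMod 2, chi a + chi (a + 1) = 0 := by decide

lemma bias {m : ℕ} (f : (Fin m → ZMod 2) → ZMod 2) (hf : DegLE 2 f) :
    (∑ x, chi (f x)) = 0 ∨ ∃ j, j ≤ m ∧ (∑ x, chi (f x)).natAbs = 2 ^ j := by
  classical
  have hcube := degle_cube hf
  set S : ℤ := ∑ x, chi (f x) with hS
  set Kp : (Fin m → ZMod 2) → Prop := fun z => ∀ x, f (x + z) = f x + f z + f 0 with hKp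
  have hφadd : ∀ z x y : Fin m → ZMod 2,
      f (x + y + z) + f (x + y) + f z + f 0
        = (f (x + z) + f x + f z + f 0) + (f (y + z) + f y + f z + f 0) := by
    intro z x y
    have h := hcube 0 x y z
    simp only [zero_add] at h
    exact h_add8 (f 0) (f x) (f y) (f z) (f (x+y)) (f (x+z)) (f (y+z)) (f (x+y+z)) h
  have hsplit : ∀ z x : Fin m → ZMod 2,
      f x + f (x + z) = (f (x + z) + f x + f z + f 0) + (f z + f 0) :=
    fun z x => h_split (f x) (f (x+z)) (f z) (f 0)
  have hSsq : S * S = ∑ z : Fin m → ZMod 2, ∑ x : Fin m → ZMod 2, chi (f x + f (x + z)) := by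
    rw [hS, Finset.sum_mul_sum]
    have h1 : ∀ x : Fin m → ZMod 2,
        ∑ y : Fin m → ZMod 2, chi (f x) * chi (f y)
          = ∑ z : Fin m → ZMod 2, chi (f x + f (x + z)) := by
      intro x
      rw [← ((Equiv.addLeft x).bijective.sum_comp (fun y => chi (f x) * chi (f y)))]
      exact Finset.sum_congr rfl fun z _ => (chi_add _ _).symm
    rw [Finset.sum_congr rfl fun x _ => h1 x]
    exact Finset.sum_comm
  have hinner : ∀ z : Fin m → ZMod 2,
      (∑ x : Fin m → ZMod 2, chi (f x + f (x + z)))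
        = chi (f z + f 0) * (if Kp z then (2 ^ m : ℤ) else 0) := by
    intro z
    by_cases hK : Kp z
    · rw [if_pos hK]
      have hval : ∀ x, f x + f (x + z) = f z + f 0 := by
        intro x
        rw [hsplit z x]
        have h0 : f (x + z) + f x + f z + f 0 = 0 := by
          rw [hK x]; exact h_zero (f x) (f z) (f 0)
        rw [h0, zero_add]
      rw [Finset.sum_congr rfl fun x _ => congrArg chi (hval x)]
      rw [Finset.sum_const, Finset.card_univ, card_V]
      push_cast
      ring
    · rw [if_neg hK, mul_zero]
      have hKn : ∃ x₀, f (x₀ + z) ≠ f x₀ + f z + f 0 := by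
        by_contra h; push_neg at h; exact hK h
      obtain ⟨x₀, hx₀⟩ := hKn
      set φ : (Fin m → ZMod 2) → ZMod 2 := fun x => f (x + z) + f x + f z + f 0 with hφ
      have hφ0 : φ x₀ = 1 := h_ne (f (x₀+z)) (f x₀) (f z) (f 0) hx₀
      have hφadd' : ∀ x y, φ (x + y) = φ x + φ y := fun x y => hφadd z x y
      have hsum0 : (∑ x : Fin m → ZMod 2, chi (φ x)) = 0 := by
        have h1 : ∑ x : Fin m → ZMod 2, chi (φ (x + x₀)) = ∑ x : Fin m → ZMod 2, chi (φ x) :=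
          (Equiv.addRight x₀).bijective.sum_comp (fun x => chi (φ x))
        have h2 : ∀ x, chi (φ (x + x₀)) = - chi (φ x) := by
          intro x; rw [hφadd' x x₀, hφ0, chi_one_flip]
        rw [Finset.sum_congr rfl fun x _ => h2 x, Finset.sum_neg_distrib] at h1
        linarith [h1]
      calc ∑ x : Fin m → ZMod 2, chi (f x + f (x + z))
          = ∑ x : Fin m → ZMod 2, chi (φ x) * chi (f z + f 0) := by
            refine Finset.sum_congr rfl fun x _ => ?_
            rw [hsplit z x, chi_add]
        _ = (∑ x : Fin m → ZMod 2, chi (φ x)) * chi (f z + f 0) := by rw [← Finset.sum_mul]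
        _ = 0 := by rw [hsum0, zero_mul]
  have hK0 : S * S = 2 ^ m * ∑ z ∈ univ.filter Kp, chi (f z + f 0) := by
    rw [hSsq, Finset.sum_congr rfl fun z _ => hinner z]
    rw [Finset.mul_sum]
    rw [← Finset.sum_filter_add_sum_filter_not univ Kp]
    have hz2 : ∀ z ∈ univ.filter (fun z => ¬ Kp z),
        chi (f z + f 0) * (if Kp z then (2 ^ m : ℤ) else 0) = 0 := by
      intro z hz
      rw [if_neg (mem_filter.mp hz).2, mul_zero]
    rw [Finset.sum_eq_zero hz2, add_zero]
    refine Finset.sum_congr rfl fun z hz => ?_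
    rw [if_pos (mem_filter.mp hz).2]
    ring
  have hKadd : ∀ z z', Kp z → Kp z' → Kp (z + z') := by
    intro z z' hz hz' x
    have e1 : f (x + (z + z')) = f ((x + z) + z') := by rw [add_assoc]
    rw [e1, hz' (x + z), hz x, hz' z]
    have : ∀ B C D A : ZMod 2, A + B + D + C + D = A + (B + C + D) + D := by decide
    exact this (f z) (f z') (f 0) (f x)
  have hψ : ∀ z z', Kp z' → f (z + z') + f 0 = (f z + f 0) + (f z' + f 0) := by
    intro z z' h'
    rw [h' z]
    exact h_psi (f z) (f z') (f 0)
  by_cases hex : ∃ z₀ ∈ univ.filter Kp, f z₀ + f 0 = 1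
  · left
    obtain ⟨z₀, hz₀mem, hz₀⟩ := hex
    have hz₀K : Kp z₀ := (mem_filter.mp hz₀mem).2
    have hz₀ne : z₀ ≠ 0 := by
      intro h; subst h
      rw [zmod2_add_self (f 0)] at hz₀
      exact absurd hz₀ (by decide)
    have hsum : (∑ z ∈ univ.filter Kp, chi (f z + f 0)) = 0 := by
      refine Finset.sum_involution (fun z _ => z + z₀) ?_ ?_ ?_ ?_
      · intro z hz
        have : f (z + z₀) + f 0 = (f z + f 0) + 1 := by rw [hψ z z₀ hz₀K, hz₀]
        rw [this]
        exact h_flip2 (f z + f 0)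
      · intro z hz _
        show z + z₀ ≠ z
        intro hcon
        apply hz₀ne
        simpa using congrArg (fun w => w - z) hcon
      · intro z hz
        refine mem_filter.mpr ⟨mem_univ _, hKadd z z₀ (mem_filter.mp hz).2 hz₀K⟩
      · intro z hz
        show z + z₀ + z₀ = z
        rw [add_assoc]
        have : z₀ + z₀ = 0 := by funext i; exact zmod2_add_self _
        rw [this, add_zero]
    rw [hsum, mul_zero] at hK0
    exact mul_self_eq_zero.mp hK0
  · right
    push_neg at hex
    have hall : ∀ z ∈ univ.filter Kp, chi (f z + f 0) = 1 := by
      intro z hz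
      have h1 : f z + f 0 ≠ 1 := hex z hz
      have h0 : f z + f 0 = 0 := by
        have : ∀ t : ZMod 2, t ≠ 1 → t = 0 := by decide
        exact this _ h1
      rw [h0, chi_zero]
    have hcardK : S * S = 2 ^ m * ((univ.filter Kp).card : ℤ) := by
      rw [hK0, Finset.sum_congr rfl hall, Finset.sum_const]
      simp
    -- subgroup
    let Ksub : AddSubgroup (Fin m → ZMod 2) :=
      { carrier := {z | Kp z}
        zero_mem' := by
          intro x
          simp only [add_zero]
          have : ∀ A B : ZMod 2, A = A + B + B := by decide
          exact this (f x) (f 0)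
        add_mem' := fun ha hb => hKadd _ _ ha hb
        neg_mem' := by
          intro z hz
          have : -z = z := by
            funext i
            have : ∀ t : ZMod 2, -t = t := by decide
            simpa using this (z i)
          rw [this]; exact hz }
    have hcard_eq : Nat.card Ksub = (univ.filter Kp).card := by
      rw [Nat.card_eq_fintype_card]
      have hmem : ∀ z, z ∈ Ksub ↔ Kp z := fun z => Iff.rfl
      exact Fintype.card_of_subtype (filter Kp univ) (fun z => by rw [mem_filter]; simp [hmem])
    have hdvd : (univ.filter Kp).card ∣ 2 ^ m := by
      have h1 : Nat.card Ksub ∣ Nat.card (Fin m → ZMod 2) :=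
        AddSubgroup.card_addSubgroup_dvd_card Ksub
      rw [hcard_eq, Nat.card_eq_fintype_card (α := Fin m → ZMod 2), card_V] at h1
      exact h1
    obtain ⟨k, hk, hkeq⟩ := (Nat.dvd_prime_pow Nat.prime_two).mp hdvd
    have hSS : S * S = 2 ^ (m + k) := by
      rw [hcardK, hkeq]
      push_cast
      rw [pow_add]
    have hSdvd : S ∣ 2 ^ (m + k) := ⟨S, hSS.symm⟩
    have hSnat : S.natAbs ∣ 2 ^ (m + k) := by
      have h := Int.natAbs_dvd_natAbs.mpr hSdvd
      have h2 : ((2:ℤ) ^ (m+k)).natAbs = 2 ^ (m+k) := by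
        simp [Int.natAbs_pow]
      rwa [h2] at h
    obtain ⟨j, hj, hjeq⟩ := (Nat.dvd_prime_pow Nat.prime_two).mp hSnat
    refine ⟨j, ?_, hjeq⟩
    have habs : |S| ≤ (2 ^ m : ℤ) := by
      calc |S| ≤ ∑ x : Fin m → ZMod 2, |chi (f x)| := Finset.abs_sum_le_sum_abs _ _
        _ = ∑ _x : Fin m → ZMod 2, 1 := Finset.sum_congr rfl fun x _ => chi_abs _
        _ = 2 ^ m := by rw [Finset.sum_const, Finset.card_univ, card_V]; simp
    have hna : S.natAbs ≤ 2 ^ m := by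
      rw [Int.abs_eq_natAbs] at habs
      exact_mod_cast habs
    rw [hjeq] at hna
    exact (Nat.pow_le_pow_iff_right (by norm_num)).mp hna


lemma gap_lemma (r : ℕ) : ∀ (n : ℕ) {ι : Type} [DecidableEq ι] (s : Finset ι) (h : ι → ℕ),
    s.card = n → n ≤ 2 ^ r → (∀ a ∈ s, 1 ≤ h a) →
    ∃ T : ℕ, T ≤ (r + 2) * n ∧
      (∑ a ∈ s.filter (fun a => T < h a), ((1:ℝ)/4) ^ (h a)) ≤ ((1:ℝ)/4) ^ (T + r + 1) := by
  intro n
  induction n using Nat.strong_induction_on with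
  | _ n IH =>
    intro ι _ s h hcard hn h1
    by_cases hc : (∑ a ∈ s, ((1:ℝ)/4) ^ (h a)) ≤ ((1:ℝ)/4) ^ (r + 1)
    · refine ⟨0, by omega, ?_⟩
      have : s.filter (fun a => 0 < h a) = s := by
        apply Finset.filter_true_of_mem
        intro a ha; exact h1 a ha
      rw [this]
      simpa using hc
    · push_neg at hc
      have hsne : s.Nonempty := by
        rcases Finset.eq_empty_or_nonempty s with he | hne
        · exfalso
          rw [he, Finset.sum_empty] at hc
          exact absurd hc (not_lt.mpr (by positivity))
        · exact hne
      have hn1 : 1 ≤ n := by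
        rw [← hcard]; exact Finset.card_pos.mpr hsne
      set d : ℕ := Nat.clog 4 n with hd
      have hnd : n ≤ 4 ^ d := Nat.le_pow_clog (by norm_num) n
      have hdr : d ≤ r := by
        have h4 : n ≤ 4 ^ r := le_trans hn (by
          have : (2:ℕ) ^ r ≤ 4 ^ r := Nat.pow_le_pow_left (by norm_num) r
          exact this)
        calc d = Nat.clog 4 n := hd
          _ ≤ Nat.clog 4 (4 ^ r) := Nat.clog_mono_right _ h4
          _ = r := Nat.clog_pow _ _ (by norm_num)
      set W : Finset ι := s.filter (fun a => h a ≤ r + 1 + d) with hW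
      -- bound on the sum outside any shallow window
      have houtside : ∀ (t : Finset ι), t ⊆ s → (∀ a ∈ t, r + 2 + d ≤ h a) →
          (∑ a ∈ t, ((1:ℝ)/4) ^ (h a)) ≤ ((1:ℝ)/4) ^ (r + 2) := by
        intro t hts hta
        have : ∀ a ∈ t, ((1:ℝ)/4) ^ (h a) ≤ ((1:ℝ)/4) ^ (r + 2 + d) := by
          intro a ha
          exact pow_le_pow_of_le_one (by norm_num) (by norm_num) (hta a ha)
        calc (∑ a ∈ t, ((1:ℝ)/4) ^ (h a)) ≤ ∑ _a ∈ t, ((1:ℝ)/4) ^ (r + 2 + d) :=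
              Finset.sum_le_sum this
          _ = t.card * ((1:ℝ)/4) ^ (r + 2 + d) := by rw [Finset.sum_const]; ring
          _ ≤ (4:ℝ) ^ d * ((1:ℝ)/4) ^ (r + 2 + d) := by
              have htc : (t.card : ℝ) ≤ (4:ℝ) ^ d := by
                have : t.card ≤ n := by rw [← hcard]; exact Finset.card_le_card hts
                have h2 : (t.card : ℝ) ≤ (n : ℝ) := by exact_mod_cast this
                have h3 : (n : ℝ) ≤ (4:ℝ) ^ d := by exact_mod_cast hnd
                linarith
              have hp : (0:ℝ) ≤ ((1:ℝ)/4) ^ (r + 2 + d) := by positivity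
              exact mul_le_mul_of_nonneg_right htc hp
          _ = ((1:ℝ)/4) ^ (r + 2) := by
              rw [pow_add]
              rw [div_pow, one_pow]
              field_simp
              ring_nf
              rw [← mul_pow]
              norm_num
      have hWne : W.Nonempty := by
        by_contra hWe
        rw [Finset.not_nonempty_iff_eq_empty] at hWe
        have hall : ∀ a ∈ s, r + 2 + d ≤ h a := by
          intro a ha
          by_contra hlt
          push_neg at hlt
          have : a ∈ W := by
            rw [hW, mem_filter]; exact ⟨ha, by omega⟩
          rw [hWe] at this
          exact absurd this (Finset.notMem_empty a)
        have := houtside s (subset_refl s) hall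
        have hpp : ((1:ℝ)/4) ^ (r + 2) < ((1:ℝ)/4) ^ (r + 1) := by
          apply pow_lt_pow_right_of_lt_one₀ (by norm_num) (by norm_num)
          omega
        linarith
      set M : ℕ := (W.image h).max' (hWne.image h) with hM
      have hMmem : ∃ a ∈ W, h a = M := by
        have := Finset.max'_mem (W.image h) (hWne.image h)
        rw [Finset.mem_image] at this
        obtain ⟨a, ha, hha⟩ := this
        exact ⟨a, ha, hha⟩
      have hMle : ∀ a ∈ W, h a ≤ M := by
        intro a ha
        exact Finset.le_max' _ _ (Finset.mem_image_of_mem h ha)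
      have hMd : M ≤ r + 1 + d := by
        apply Finset.max'_le
        intro y hy
        rw [Finset.mem_image] at hy
        obtain ⟨a, ha, rfl⟩ := hy
        exact (Finset.mem_filter.mp ha).2
      -- key: M ≤ (r+2) * W.card
      have hkey : M ≤ (r + 2) * W.card := by
        rcases Nat.lt_or_ge W.card 2 with hμ | hμ
        · -- W.card = 1
          have hμ1 : W.card = 1 := by
            have : 1 ≤ W.card := Finset.card_pos.mpr hWne
            omega
          obtain ⟨a₀, ha₀⟩ := Finset.card_eq_one.mp hμ1
          have ha₀W : a₀ ∈ W := by rw [ha₀]; exact Finset.mem_singleton_self _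
          have hMa₀ : M = h a₀ := by
            obtain ⟨a, haW, hha⟩ := hMmem
            rw [ha₀, Finset.mem_singleton] at haW
            rw [← hha, haW]
          rw [hμ1, mul_one]
          rw [hMa₀]
          by_contra hbig
          push_neg at hbig
          -- h a₀ ≥ r + 3 > r+2 : then total sum ≤ 2*(1/4)^(r+2) < (1/4)^(r+1)
          have hsum_split : (∑ a ∈ s, ((1:ℝ)/4) ^ (h a))
              = (∑ a ∈ s \ W, ((1:ℝ)/4) ^ (h a)) + (∑ a ∈ W, ((1:ℝ)/4) ^ (h a)) := by
            rw [Finset.sum_sdiff (Finset.filter_subset _ _)]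
          have hWsum : (∑ a ∈ W, ((1:ℝ)/4) ^ (h a)) ≤ ((1:ℝ)/4) ^ (r + 2) := by
            rw [ha₀, Finset.sum_singleton]
            apply pow_le_pow_of_le_one (by norm_num) (by norm_num)
            omega
          have hrest : (∑ a ∈ s \ W, ((1:ℝ)/4) ^ (h a)) ≤ ((1:ℝ)/4) ^ (r + 2) := by
            apply houtside _ (Finset.sdiff_subset)
            intro a ha
            rw [Finset.mem_sdiff, hW, Finset.mem_filter] at ha
            have := ha.2
            push_neg at this
            have := this ha.1
            omega
          have h2 : ((1:ℝ)/4) ^ (r + 1) = 4 * ((1:ℝ)/4) ^ (r + 2) := by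
            rw [pow_add, pow_add]
            field_simp
          have hpos : (0:ℝ) < ((1:ℝ)/4) ^ (r + 2) := by positivity
          rw [hsum_split] at hc
          rw [h2] at hc
          linarith
        · -- W.card ≥ 2
          calc M ≤ r + 1 + d := hMd
            _ ≤ 2 * (r + 2) := by omega
            _ ≤ (r + 2) * W.card := by
                rw [mul_comm 2 (r+2)]
                exact Nat.mul_le_mul_left _ hμ
      clear_value M
      -- recurse on s' = elements with h a > M
      set s' : Finset ι := s.filter (fun a => M < h a) with hs'
      have hs'W : s' = s \ W := by
        rw [hs', hW]
        ext a
        rw [Finset.mem_filter, Finset.mem_sdiff, Finset.mem_filter]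
        constructor
        · rintro ⟨ha, hMa⟩
          refine ⟨ha, ?_⟩
          rintro ⟨-, hle⟩
          have : h a ≤ M := hMle a (by rw [hW, Finset.mem_filter]; exact ⟨ha, hle⟩)
          omega
        · rintro ⟨ha, hna⟩
          refine ⟨ha, ?_⟩
          by_contra hle
          push_neg at hle
          exact hna ⟨ha, by omega⟩
      have hcard' : s'.card = n - W.card := by
        rw [hs'W, Finset.card_sdiff_of_subset (Finset.filter_subset _ _), hcard]
      have hWcard_le : W.card ≤ n := by
        rw [← hcard]; exact Finset.card_le_card (Finset.filter_subset _ _)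
      have hWpos : 1 ≤ W.card := Finset.card_pos.mpr hWne
      obtain ⟨T', hT'le, hT'⟩ := IH (n - W.card) (by omega) s' (fun a => h a - M)
        hcard' (by omega) (by
          intro a ha
          rw [hs', Finset.mem_filter] at ha
          show 1 ≤ h a - M
          omega)
      refine ⟨M + T', ?_, ?_⟩
      · calc M + T' ≤ (r+2) * W.card + (r+2) * (n - W.card) := Nat.add_le_add hkey hT'le
          _ = (r+2) * n := by
              rw [← Nat.mul_add]
              congr 1
              omega
      · have htail_eq : s.filter (fun a => M + T' < h a) = s'.filter (fun a => T' < h a - M) := by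
          rw [hs']
          rw [Finset.filter_filter]
          apply Finset.filter_congr
          intro a _
          constructor
          · intro hlt
            constructor
            · omega
            · omega
          · rintro ⟨h1', h2'⟩
            omega
        rw [htail_eq]
        have hterm : ∀ a ∈ s'.filter (fun a => T' < h a - M),
            ((1:ℝ)/4) ^ (h a) = ((1:ℝ)/4) ^ M * ((1:ℝ)/4) ^ (h a - M) := by
          intro a ha
          rw [Finset.mem_filter, hs', Finset.mem_filter] at ha
          rw [← pow_add]
          congr 1
          omega
        rw [Finset.sum_congr rfl hterm, ← Finset.mul_sum]
        calc ((1:ℝ)/4) ^ M * (∑ a ∈ s'.filter (fun a => T' < h a - M), ((1:ℝ)/4) ^ (h a - M))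
            ≤ ((1:ℝ)/4) ^ M * ((1:ℝ)/4) ^ (T' + r + 1) := by
              apply mul_le_mul_of_nonneg_left _ (by positivity)
              exact hT'
          _ = ((1:ℝ)/4) ^ (M + T' + r + 1) := by
              rw [← pow_add]
              congr 1
              omega


end BRG

/-- explicit gap from `1/3` for functions of bounded quadratic rank. -/
theorem bounded_rank2_gap :
    ∀ r : ℕ, 1 ≤ r → ∀ m : ℕ, ∀ P : (Fin m → ZMod 2) → ZMod 2,
      RankLE 2 r P →
      |prOne P - 1/3| ≥ (1/12) * ((2:ℝ) ^ ((r + 2) * 2 ^ r + r))⁻¹ := by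
  intro r hr m P hrank
  classical
  obtain ⟨Q, Γ, hdegQ, hPQ⟩ := hrank
  set Y : Finset (Fin r → ZMod 2) := univ.filter (fun y => Γ y = 1) with hY
  set Qv : (Fin m → ZMod 2) → (Fin r → ZMod 2) := fun x j => Q j x with hQv
  set C : (Fin r → ZMod 2) → ℤ := fun a => ∑ y ∈ Y, BRG.chi (BRG.dot a y) with hC
  set SL : (Fin r → ZMod 2) → ℤ := fun a => ∑ x, BRG.chi (BRG.dot a (Qv x)) with hSL
  -- master identity
  have hmaster : (2:ℤ) ^ r * ((univ.filter (fun x => P x = 1)).card : ℤ) = ∑ a, C a * SL a := by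
    have h1 : ∀ a, C a * SL a
        = ∑ y ∈ Y, ∑ x : Fin m → ZMod 2, BRG.chi (BRG.dot a y) * BRG.chi (BRG.dot a (Qv x)) := by
      intro a; rw [hC, hSL]; exact Finset.sum_mul_sum _ _ _ _
    rw [Finset.sum_congr rfl fun a _ => h1 a, Finset.sum_comm]
    have h2 : ∀ y, (∑ a : Fin r → ZMod 2, ∑ x : Fin m → ZMod 2,
        BRG.chi (BRG.dot a y) * BRG.chi (BRG.dot a (Qv x)))
        = ∑ x : Fin m → ZMod 2, (if y + Qv x = 0 then (2:ℤ)^r else 0) := by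
      intro y
      rw [Finset.sum_comm]
      refine Finset.sum_congr rfl fun x _ => ?_
      have h3 : ∀ a : Fin r → ZMod 2,
          BRG.chi (BRG.dot a y) * BRG.chi (BRG.dot a (Qv x)) = BRG.chi (BRG.dot a (y + Qv x)) := by
        intro a; rw [BRG.dot_add_right, BRG.chi_add]
      rw [Finset.sum_congr rfl fun a _ => h3 a, BRG.orth]
    rw [Finset.sum_congr rfl fun y _ => h2 y]
    have h4 : ∀ y, (∑ x : Fin m → ZMod 2, (if y + Qv x = 0 then (2:ℤ)^r else 0))
        = (2:ℤ)^r * ((univ.filter (fun x => Qv x = y)).card : ℤ) := by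
      intro y
      have he : ∀ x : Fin m → ZMod 2, (if y + Qv x = 0 then (2:ℤ)^r else 0)
          = (if Qv x = y then (2:ℤ)^r else 0) := by
        intro x; simp only [BRG.pi_add_eq_zero_iff]
      rw [Finset.sum_congr rfl fun x _ => he x, ← Finset.sum_filter, Finset.sum_const]
      push_cast; ring
    rw [Finset.sum_congr rfl fun y _ => h4 y, ← Finset.mul_sum]
    congr 1
    have h5 : (univ.filter (fun x => P x = 1)).card
        = ∑ y ∈ Y, (univ.filter (fun x => Qv x = y)).card := by
      have hPQ' : (univ.filter (fun x => P x = 1))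
          = (univ.filter (fun x => Γ (Qv x) = 1)) := by
        apply Finset.filter_congr
        intro x _
        rw [hPQ x]
      rw [hPQ']
      rw [Finset.card_eq_sum_card_fiberwise (f := Qv) (t := Y)
        (fun x hx => by simpa [hY] using hx)]
      refine Finset.sum_congr rfl fun y hy => ?_
      congr 1
      ext x
      simp only [Finset.mem_filter, Finset.mem_univ, true_and]
      constructor
      · rintro ⟨-, h⟩; exact h
      · rintro h
        refine ⟨?_, h⟩
        rw [h]
        exact (mem_filter.mp hy).2
    rw [h5]
    push_cast
    ring
  -- classification of the biases SL a
  have hclass : ∀ a : Fin r → ZMod 2, SL a = 0 ∨ ∃ j, j ≤ m ∧ (SL a).natAbs = 2 ^ j := by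
    intro a
    have hdeg : DegLE 2 (fun x => BRG.dot a (Qv x)) := BRG.degle_sum a Q hdegQ
    exact BRG.bias _ hdeg
  have hjex : ∀ a : Fin r → ZMod 2, ∃ j, SL a ≠ 0 → (j ≤ m ∧ (SL a).natAbs = 2 ^ j) := by
    intro a
    rcases hclass a with h0 | ⟨j, hj, hje⟩
    · exact ⟨0, fun hne => absurd h0 hne⟩
    · exact ⟨j, fun _ => ⟨hj, hje⟩⟩
  choose jf hjf using hjex
  set ex : (Fin r → ZMod 2) → ℕ := fun a => m - jf a with hexdef
  have hSL0 : SL 0 = 2 ^ m := by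
    simp only [hSL]
    have h0 : ∀ x : Fin m → ZMod 2, BRG.chi (BRG.dot 0 (Qv x)) = 1 := fun x => by
      rw [BRG.dot_zero_left, BRG.chi_zero]
    rw [Finset.sum_congr rfl fun x _ => h0 x, Finset.sum_const, Finset.card_univ, BRG.card_V]
    simp
  have hjf0 : jf 0 = m := by
    have hne : SL 0 ≠ 0 := by rw [hSL0]; positivity
    obtain ⟨hle, habs⟩ := hjf 0 hne
    rw [hSL0] at habs
    have h2 : ((2:ℤ)^m).natAbs = 2^m := by simp [Int.natAbs_pow]
    rw [h2] at habs
    exact (Nat.pow_right_injective (le_refl 2) habs).symm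
  have hex0 : ex 0 = 0 := by rw [hexdef]; simp [hjf0]
  -- Parseval
  have hpars : ∑ a : Fin r → ZMod 2, (C a)^2 = 2^r * (Y.card : ℤ) := by
    have h1 : ∀ a, (C a)^2 = ∑ y ∈ Y, ∑ y' ∈ Y, BRG.chi (BRG.dot a (y + y')) := by
      intro a
      rw [sq, hC, Finset.sum_mul_sum]
      refine Finset.sum_congr rfl fun y _ => Finset.sum_congr rfl fun y' _ => ?_
      rw [BRG.dot_add_right, BRG.chi_add]
    rw [Finset.sum_congr rfl fun a _ => h1 a, Finset.sum_comm]
    have h2 : ∀ y ∈ Y, (∑ a : Fin r → ZMod 2, ∑ y' ∈ Y, BRG.chi (BRG.dot a (y + y')))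
        = (2:ℤ)^r := by
      intro y hy
      rw [Finset.sum_comm]
      have h3 : ∀ y' ∈ Y, (∑ a : Fin r → ZMod 2, BRG.chi (BRG.dot a (y + y')))
          = if y' = y then (2:ℤ)^r else 0 := by
        intro y' _
        rw [BRG.orth]
        simp only [BRG.pi_add_eq_zero_iff]
      rw [Finset.sum_congr rfl h3, Finset.sum_ite_eq' Y y (fun _ => (2:ℤ)^r), if_pos hy]
    rw [Finset.sum_congr rfl h2, Finset.sum_const]
    push_cast
    ring
  have hC0 : C 0 = (Y.card : ℤ) := by
    simp only [hC]
    have h0 : ∀ y ∈ Y, BRG.chi (BRG.dot 0 y) = 1 := fun y _ => by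
      rw [BRG.dot_zero_left, BRG.chi_zero]
    rw [Finset.sum_congr rfl h0, Finset.sum_const]
    simp
  have herase : ∑ a ∈ univ.erase 0, (C a)^2 ≤ ((2:ℤ)^(r-1))^2 := by
    have hsum : (C 0)^2 + ∑ a ∈ univ.erase 0, (C a)^2 = ∑ a : Fin r → ZMod 2, (C a)^2 :=
      Finset.add_sum_erase univ (fun a => (C a)^2) (mem_univ (0 : Fin r → ZMod 2))
    have hYle : (Y.card:ℤ) ≤ 2^r := by
      have h1 : Y.card ≤ 2^r := by
        calc Y.card ≤ (univ : Finset (Fin r → ZMod 2)).card := card_le_card (subset_univ Y)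
          _ = 2^r := by rw [card_univ, BRG.card_V]
      exact_mod_cast h1
    have hYnn : (0:ℤ) ≤ (Y.card:ℤ) := by positivity
    have h2r : (2:ℤ)^r = 2 * 2^(r-1) := by
      rw [← pow_succ']
      congr 1
      omega
    have hp := hpars
    rw [← hsum, hC0] at hp
    nlinarith [sq_nonneg ((Y.card:ℤ) - 2^(r-1))]
  -- choice of the cut T
  set sF : Finset (Fin r → ZMod 2) := (univ.erase 0).filter (fun a => SL a ≠ 0 ∧ 1 ≤ ex a)
    with hsF
  have hscard : sF.card ≤ 2^r := by
    calc sF.card ≤ (univ.erase (0 : Fin r → ZMod 2)).card :=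
          card_le_card (filter_subset _ _)
      _ ≤ (univ : Finset (Fin r → ZMod 2)).card := card_le_card (erase_subset _ _)
      _ = 2^r := by rw [card_univ, BRG.card_V]
  obtain ⟨T, hTle, hTtail⟩ := BRG.gap_lemma r sF.card sF ex rfl hscard
    (fun a ha => ((mem_filter.mp ha).2).2)
  have hTbound : T ≤ (r+2) * 2^r :=
    le_trans hTle (Nat.mul_le_mul_left _ hscard)
  set tl : Finset (Fin r → ZMod 2) := sF.filter (fun a => T < ex a) with htl
  -- real-valued identities
  have hprOne : prOne P = ((univ.filter (fun x => P x = 1)).card : ℝ) / 2^m := by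
    rw [prOne, distOf, BRG.card_V]
    push_cast
    rfl
  set Mval : ℝ := (∑ a ∈ univ \ tl, (C a:ℝ) * (SL a:ℝ)) / (2^(m+r)) with hMval
  set Eval : ℝ := (∑ a ∈ tl, (C a:ℝ) * (SL a:ℝ)) / (2^(m+r)) with hEval
  have hpr_eq : prOne P = Mval + Eval := by
    rw [hprOne, hMval, hEval, ← add_div]
    have hsplit : (∑ a ∈ univ \ tl, (C a:ℝ) * (SL a:ℝ)) + (∑ a ∈ tl, (C a:ℝ)*(SL a:ℝ))
        = ∑ a, (C a:ℝ) * (SL a:ℝ) := Finset.sum_sdiff (subset_univ tl)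
    rw [hsplit]
    have hm' : (∑ a, (C a:ℝ) * (SL a:ℝ))
        = 2^r * ((univ.filter (fun x => P x = 1)).card : ℝ) := by
      exact_mod_cast hmaster.symm
    rw [hm', pow_add]
    rw [eq_div_iff (by positivity)]
    field_simp
  -- Mval is dyadic with denominator 2^(T+r)
  have hterm : ∀ a : Fin r → ZMod 2, ∃ z : ℤ, a ∈ univ \ tl →
      (C a:ℝ) * ((SL a:ℝ) * 2^T / 2^m) = (z:ℝ) := by
    intro a
    by_cases h0 : SL a = 0
    · exact ⟨0, fun _ => by rw [h0]; simp⟩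
    · obtain ⟨hjle, hjabs⟩ := hjf a h0
      by_cases hexT : ex a ≤ T
      · have hjm : m ≤ jf a + T := by
          have hxx : ex a = m - jf a := rfl
          omega
        have hpow : ((2:ℝ)^(jf a)) * 2^T / 2^m = ((2:ℝ)^(jf a + T - m)) := by
          rw [div_eq_iff (by positivity : ((2:ℝ)^m) ≠ 0), ← pow_add, ← pow_add]
          congr 1
          omega
        rcases Int.natAbs_eq (SL a) with hsgn | hsgn
        · refine ⟨C a * 2^(jf a + T - m), fun _ => ?_⟩
          rw [hsgn, hjabs]
          push_cast
          rw [hpow]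
        · refine ⟨C a * (-(2^(jf a + T - m))), fun _ => ?_⟩
          rw [hsgn, hjabs]
          push_cast
          have hneg : (-((2:ℝ)^(jf a))) * 2^T / 2^m = -((2:ℝ)^(jf a + T - m)) := by
            rw [neg_mul, neg_div, hpow]
          rw [hneg]
      · refine ⟨0, fun hmem => ?_⟩
        exfalso
        rw [Finset.mem_sdiff] at hmem
        apply hmem.2
        rw [htl, Finset.mem_filter]
        push_neg at hexT
        refine ⟨?_, hexT⟩
        rw [hsF, Finset.mem_filter, Finset.mem_erase]
        have hane : a ≠ 0 := by
          intro hzz; subst hzz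
          rw [hex0] at hexT
          omega
        exact ⟨⟨hane, mem_univ _⟩, h0, by omega⟩
  choose zf hzf using hterm
  have hdyadic : Mval = ((∑ a ∈ univ \ tl, zf a : ℤ) : ℝ) / 2^(T+r) := by
    have hM2 : Mval * 2^(T+r) = ∑ a ∈ univ \ tl, (C a:ℝ) * ((SL a:ℝ) * 2^T / 2^m) := by
      rw [hMval, div_mul_eq_mul_div, Finset.sum_mul, Finset.sum_div]
      refine Finset.sum_congr rfl fun a _ => ?_
      rw [pow_add, pow_add]
      field_simp
    rw [Finset.sum_congr rfl (fun a ha => hzf a ha)] at hM2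
    rw [eq_div_iff (by positivity : ((2:ℝ)^(T+r)) ≠ 0)]
    rw [hM2]
    push_cast
    rfl
  -- Mval is 1/(3*2^(T+r))-far from 1/3
  have hMgap : |Mval - 1/3| ≥ 1/3 * (1/2^(T+r)) := by
    set KK : ℤ := ∑ a ∈ univ \ tl, zf a with hKK
    have h3 : (3:ℤ) * KK - 2^(T+r) ≠ 0 := by
      intro hcon
      have hdvd : (3:ℤ) ∣ 2^(T+r) := ⟨KK, by omega⟩
      have hp3 : Prime (3:ℤ) := Int.prime_three
      have hd2 := hp3.dvd_of_dvd_pow (n := T+r) (a := (2:ℤ)) hdvd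
      norm_num at hd2
    have habs1 : (1:ℤ) ≤ |3 * KK - 2^(T+r)| := Int.one_le_abs (by omega)
    have hcast : |Mval - 1/3| = |((3*KK - 2^(T+r) : ℤ) : ℝ)| / (3 * 2^(T+r)) := by
      rw [hdyadic]
      have he : (KK:ℝ)/2^(T+r) - 1/3 = ((3*KK - 2^(T+r) : ℤ) : ℝ) / (3 * 2^(T+r)) := by
        push_cast
        field_simp
      rw [he, abs_div, abs_of_pos (by positivity : (0:ℝ) < 3 * 2^(T+r))]
    rw [hcast, ge_iff_le]
    have h1R : (1:ℝ) ≤ |((3*KK - 2^(T+r) : ℤ) : ℝ)| := by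
      have hcc : ((|3*KK - 2^(T+r)| : ℤ) : ℝ) = |((3*KK - 2^(T+r) : ℤ) : ℝ)| := by
        push_cast
        ring
      rw [← hcc]
      exact_mod_cast habs1
    calc (1:ℝ)/3 * (1/2^(T+r)) = 1/(3*2^(T+r)) := by ring
      _ ≤ |((3*KK - 2^(T+r) : ℤ) : ℝ)| / (3*2^(T+r)) := by
          gcongr
  -- tail bound
  have htailR : (∑ a ∈ tl, ((SL a:ℝ)/2^m)^2) ≤ ((1:ℝ)/4)^(T+r+1) := by
    have he : ∀ a ∈ tl, ((SL a:ℝ)/2^m)^2 = ((1:ℝ)/4)^(ex a) := by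
      intro a ha
      have haS : a ∈ sF := (mem_filter.mp ha).1
      have hSLne : SL a ≠ 0 := ((mem_filter.mp haS).2).1
      obtain ⟨hjle, hjabs⟩ := hjf a hSLne
      have habs2 : (SL a:ℝ)^2 = ((2:ℝ)^(jf a))^2 := by
        have h1 : (((SL a).natAbs : ℤ) : ℝ) = (2:ℝ)^(jf a) := by
          rw [hjabs]; push_cast; ring
        rcases Int.natAbs_eq (SL a) with hsgn | hsgn
        · rw [hsgn, h1]
        · rw [hsgn]
          push_cast at h1 ⊢
          rw [h1]
          ring
      have hfour : ∀ n : ℕ, ((2:ℝ)^n)^2 = 4^n := by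
        intro n
        rw [show (4:ℝ) = 2^2 by norm_num, ← pow_mul, ← pow_mul, mul_comm]
      rw [div_pow, habs2, hfour, hfour]
      have h4 : (4:ℝ)^m = 4^(m - jf a) * 4^(jf a) := by
        rw [← pow_add]
        congr 1
        omega
      have hexa : ex a = m - jf a := rfl
      rw [h4, hexa, one_div, inv_pow]
      rw [div_eq_iff (by positivity : ((4:ℝ)^(m - jf a) * 4^(jf a)) ≠ 0)]
      rw [inv_mul_eq_div]
      rw [eq_div_iff (by positivity : ((4:ℝ)^(m - jf a)) ≠ 0)]
      ring
    rw [Finset.sum_congr rfl he]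
    exact hTtail
  have hCtl : (∑ a ∈ tl, (C a:ℝ)^2) ≤ ((2:ℝ)^(r-1))^2 := by
    have h1 : (∑ a ∈ tl, (C a)^2 : ℤ) ≤ ((2:ℤ)^(r-1))^2 := by
      refine le_trans (Finset.sum_le_sum_of_subset_of_nonneg ?_ ?_) herase
      · intro a ha
        exact (mem_filter.mp ((mem_filter.mp ha).1)).1
      · intro a _ _
        positivity
    exact_mod_cast h1
  have hEbound : |Eval| ≤ 1/4 * (1/2^(T+r)) := by
    have hE2 : Eval = (∑ a ∈ tl, (C a:ℝ) * ((SL a:ℝ)/2^m)) / 2^r := by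
      rw [hEval, pow_add, Finset.sum_div, Finset.sum_div]
      refine Finset.sum_congr rfl fun a _ => ?_
      field_simp
    have hCS : (∑ a ∈ tl, (C a:ℝ) * ((SL a:ℝ)/2^m))^2
        ≤ (∑ a ∈ tl, (C a:ℝ)^2) * (∑ a ∈ tl, ((SL a:ℝ)/2^m)^2) :=
      Finset.sum_mul_sq_le_sq_mul_sq tl (fun a => (C a:ℝ)) (fun a => (SL a:ℝ)/2^m)
    have hnum : (∑ a ∈ tl, (C a:ℝ) * ((SL a:ℝ)/2^m))^2
        ≤ ((2:ℝ)^(r-1))^2 * ((1:ℝ)/4)^(T+r+1) := by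
      refine le_trans hCS ?_
      have h1 : (0:ℝ) ≤ ∑ a ∈ tl, ((SL a:ℝ)/2^m)^2 :=
        Finset.sum_nonneg fun a _ => sq_nonneg _
      exact mul_le_mul hCtl htailR h1 (by positivity)
    have hkey : ((2:ℝ)^(r-1))^2 * 4 = ((2:ℝ)^r)^2 := by
      have h2r : (2:ℝ)^r = 2 * 2^(r-1) := by
        rw [← pow_succ']
        congr 1
        omega
      rw [h2r]
      ring
    have hEsq : Eval^2 ≤ (1/4 * (1/2^(T+r)))^2 := by
      rw [hE2, div_pow]
      rw [div_le_iff₀ (by positivity : (0:ℝ) < ((2:ℝ)^r)^2)]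
      refine le_trans hnum ?_
      have hq : ((1:ℝ)/4)^(T+r+1) = 1/4 * (1/4)^(T+r) := by
        rw [pow_succ]
        ring
      have hq2 : ((1:ℝ)/2^(T+r))^2 = (1/4)^(T+r) := by
        have hh : ((2:ℝ)^(T+r))^2 = 4^(T+r) := by
          rw [show (4:ℝ) = 2^2 by norm_num, ← pow_mul, ← pow_mul, mul_comm]
        rw [div_pow, one_pow, hh, one_div_pow]
      rw [hq]
      rw [mul_pow, hq2]
      nlinarith [pow_nonneg (by norm_num : (0:ℝ) ≤ 1/4) (T+r), hkey]
    have hB : (0:ℝ) ≤ 1/4 * (1/2^(T+r)) := by positivity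
    nlinarith [abs_nonneg Eval, sq_abs Eval]
  -- conclusion
  have hfinal : |prOne P - 1/3| ≥ 1/12 * (1/2^(T+r)) := by
    rw [hpr_eq]
    have htri : |Mval - 1/3| ≤ |Mval + Eval - 1/3| + |Eval| := by
      calc |Mval - 1/3| = |(Mval + Eval - 1/3) + (-Eval)| := by
            congr 1
            ring
        _ ≤ |Mval + Eval - 1/3| + |(-Eval)| := abs_add_le _ _
        _ = |Mval + Eval - 1/3| + |Eval| := by rw [abs_neg]
    have h12 : (1:ℝ)/3 * (1/2^(T+r)) - 1/4*(1/2^(T+r)) = 1/12 * (1/2^(T+r)) := by ring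
    linarith [hMgap, hEbound, htri]
  have hmono : ((2:ℝ)^((r+2)*2^r + r))⁻¹ ≤ 1/2^(T+r) := by
    rw [one_div]
    apply inv_anti₀ (by positivity)
    apply pow_le_pow_right₀ (by norm_num : (1:ℝ) ≤ 2)
    omega
  calc (1/12) * ((2:ℝ)^((r+2)*2^r + r))⁻¹ ≤ 1/12 * (1/2^(T+r)) := by
        apply mul_le_mul_of_nonneg_left hmono (by norm_num)
    _ ≤ |prOne P - 1/3| := hfinal
end

section
/- Let P : 𝔽₂^m → 𝔽₂ be a function with rank₂(P) ≤ r. Then for every integer t > 0 there exist an integer s with 0 ≤ s ≤ (r+t)·2^r + r and an integer A ∈ ℤ such that |E_{X ~ Unif(𝔽₂^m)}[(−1)^{P(X)}] − A/2^s| ≤ 2^{−t}·2^{−s}. -/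
open Finset

/-- The signed bias `E_{X uniform}[(-1)^{P(X)}]`. -/
noncomputable def signedBias {m : ℕ} (P : (Fin m → ZMod 2) → ZMod 2) : ℝ :=
  (∑ x : Fin m → ZMod 2, (if P x = 0 then (1:ℝ) else -1)) / (2:ℝ) ^ m

namespace RB


def chi (v : ZMod 2) : ℤ := if v = 0 then 1 else -1

lemma chi_add (u v : ZMod 2) : chi (u + v) = chi u * chi v := by revert u v; decide

lemma chi_zero : chi 0 = 1 := rfl

lemma abs_chi (v : ZMod 2) : |chi v| = 1 := by
  rcases Decidable.eq_or_ne v 0 with h | h <;> simp [chi, h]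

lemma zmod2_ne_zero {v : ZMod 2} (h : v ≠ 0) : v = 1 := by
  revert h; revert v; decide

lemma sum_chi_additive {G : Type*} [AddCommGroup G] [Fintype G] (ℓ : G → ZMod 2)
    (hadd : ∀ x y, ℓ (x + y) = ℓ x + ℓ y) [DecidablePred fun x => ℓ x = 0] :
    (∑ x, chi (ℓ x)) = if (∀ x, ℓ x = 0) then (Fintype.card G : ℤ) else 0 := by
  by_cases h : ∀ x, ℓ x = 0
  · simp [h, chi_zero, Finset.card_univ]
  · simp only [h, if_false]
    push_neg at h
    obtain ⟨x₀, hx₀⟩ := h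
    have h1 : ℓ x₀ = 1 := zmod2_ne_zero hx₀
    have key : (∑ x, chi (ℓ x)) = -(∑ x, chi (ℓ x)) := by
      calc (∑ x, chi (ℓ x)) = ∑ x, chi (ℓ (x + x₀)) := by
              exact (Fintype.sum_equiv (Equiv.addRight x₀) _ _ (fun x => rfl)).symm
        _ = ∑ x, chi (ℓ x) * chi (ℓ x₀) := by
              simp only [hadd, chi_add]
        _ = -(∑ x, chi (ℓ x)) := by simp [h1, chi]
    omega

def dot {r : ℕ} (u v : Fin r → ZMod 2) : ZMod 2 := ∑ i, u i * v i

lemma dot_add_right {r : ℕ} (a u v : Fin r → ZMod 2) :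
    dot a u + dot a v = dot a (u + v) := by
  simp [dot, mul_add, Finset.sum_add_distrib]

lemma dot_add_left {r : ℕ} (a b u : Fin r → ZMod 2) :
    dot (a + b) u = dot a u + dot b u := by
  simp [dot, add_mul, Finset.sum_add_distrib]

lemma sum_chi_dot {r : ℕ} (u : Fin r → ZMod 2) :
    (∑ a : Fin r → ZMod 2, chi (dot a u)) = if u = 0 then 2 ^ r else 0 := by
  classical
  have hadd : ∀ x y : Fin r → ZMod 2, dot (x + y) u = dot x u + dot y u := fun x y => dot_add_left x y u
  have := sum_chi_additive (fun a => dot a u) hadd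
  rw [this]
  have hiff : (∀ a : Fin r → ZMod 2, dot a u = 0) ↔ u = 0 := by
    constructor
    · intro h
      funext i
      have := h (Pi.single i 1)
      rw [dot] at this
      rw [Finset.sum_eq_single i] at this
      · simpa using this
      · intro j _ hj; simp [Pi.single_eq_of_ne hj]
      · simp
    · intro h; subst h; intro a; simp [dot]
  have hcard : (Fintype.card (Fin r → ZMod 2) : ℤ) = 2 ^ r := by
    simp [Fintype.card_fun]
  rw [if_congr hiff hcard rfl]



def Pol {m : ℕ} (f : (Fin m → ZMod 2) → ZMod 2) : Prop :=
  ∀ x d e, f (x+d+e) + f (x+d) + f (x+e) + f x = f (d+e) + f d + f e + f 0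

lemma pol_sum {m : ℕ} {ι : Type*} (s : Finset ι) (F : ι → (Fin m → ZMod 2) → ZMod 2)
    (h : ∀ i ∈ s, Pol (F i)) : Pol (fun x => ∑ i ∈ s, F i x) := by
  classical
  induction s using Finset.cons_induction with
  | empty => intro x d e; simp
  | cons a s ha ih =>
    intro x d e
    simp only [Finset.sum_cons]
    have h1 := h a (Finset.mem_cons_self a s) x d e
    have h2 := ih (fun i hi => h i (Finset.mem_cons.mpr (Or.inr hi))) x d e
    simp only at h2
    linear_combination h1 + h2

lemma zmod2_mul_self (u : ZMod 2) : u * u = u := by revert u; decide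

lemma zmod2_pow {n : ℕ} (hn : n ≠ 0) (u : ZMod 2) : u ^ n = u := by
  obtain ⟨k, rfl⟩ := Nat.exists_eq_succ_of_ne_zero hn
  induction k with
  | zero => simp
  | succ k ih => rw [pow_succ, ih (Nat.succ_ne_zero k), zmod2_mul_self]

lemma pol_monomial {m : ℕ} (c : ZMod 2) (S : Finset (Fin m)) (hS : S.card ≤ 2) :
    Pol (fun x => c * ∏ i ∈ S, x i) := by
  interval_cases h : S.card
  · rw [Finset.card_eq_zero] at h
    subst h
    intro x d e; simp
  · rw [Finset.card_eq_one] at h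
    obtain ⟨i, rfl⟩ := h
    intro x d e
    simp only [Finset.prod_singleton, Pi.add_apply, Pi.zero_apply]
    generalize x i = a; generalize d i = b; generalize e i = f
    revert a b f c; decide
  · rw [Finset.card_eq_two] at h
    obtain ⟨i, j, hij, rfl⟩ := h
    intro x d e
    simp only [Finset.prod_pair hij, Pi.add_apply, Pi.zero_apply]
    generalize x i = a1; generalize d i = b1; generalize e i = f1
    generalize x j = a2; generalize d j = b2; generalize e j = f2
    revert a1 b1 f1 a2 b2 f2 c; decide

lemma pol_eval {m : ℕ} (p : MvPolynomial (Fin m) (ZMod 2)) (hp : p.totalDegree ≤ 2) :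
    Pol (fun x => MvPolynomial.eval x p) := by
  classical
  have heval : ∀ x : Fin m → ZMod 2,
      MvPolynomial.eval x p = ∑ k ∈ p.support, (MvPolynomial.coeff k p * ∏ i ∈ k.support, x i) := by
    intro x
    rw [MvPolynomial.eval_eq']
    apply Finset.sum_congr rfl
    intro k hk
    congr 1
    rw [← Finset.prod_subset (Finset.subset_univ k.support)
      (fun i _ hi => by simp [Finsupp.notMem_support_iff.mp hi])]
    apply Finset.prod_congr rfl
    intro i hi
    exact zmod2_pow (Finsupp.mem_support_iff.mp hi) (x i)
  have : Pol (fun x => ∑ k ∈ p.support, (MvPolynomial.coeff k p * ∏ i ∈ k.support, x i)) := by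
    apply pol_sum
    intro k hk
    apply pol_monomial
    calc k.support.card = ∑ i ∈ k.support, 1 := by simp
      _ ≤ ∑ i ∈ k.support, k i := by
          apply Finset.sum_le_sum
          intro i hi
          exact Nat.one_le_iff_ne_zero.mpr (Finsupp.mem_support_iff.mp hi)
      _ ≤ p.totalDegree := MvPolynomial.le_totalDegree hk
      _ ≤ 2 := hp
  intro x d e
  simp only [heval]
  exact this x d e

variable {m : ℕ}

def lform (q : (Fin m → ZMod 2) → ZMod 2) (d x : Fin m → ZMod 2) : ZMod 2 :=
  q (x + d) + q x + q d + q 0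

lemma lform_symm (q : (Fin m → ZMod 2) → ZMod 2) (d x : Fin m → ZMod 2) :
    lform q d x = lform q x d := by
  unfold lform
  rw [add_comm x d]
  ring

lemma lform_addx {q : (Fin m → ZMod 2) → ZMod 2} (hq : Pol q) (d x y : Fin m → ZMod 2) :
    lform q d (x + y) = lform q d x + lform q d y := by
  have h := hq x d y
  unfold lform
  have e1 : x + y + d = x + d + y := by abel
  have e2 : y + d = d + y := by abel
  rw [e1, e2]
  generalize q (x + d + y) = A at *
  generalize q (x + d) = B at *
  generalize q (x + y) = C at *
  generalize q (d + y) = E at *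
  generalize q x = D at *
  generalize q d = Fv at *
  generalize q y = G at *
  generalize q 0 = H at *
  revert h
  revert A B C D E Fv G H
  decide

lemma lform_addd {q : (Fin m → ZMod 2) → ZMod 2} (hq : Pol q) (d e x : Fin m → ZMod 2) :
    lform q (d + e) x = lform q d x + lform q e x := by
  rw [lform_symm, lform_addx hq, lform_symm, lform_symm q x e]

lemma pi_add_self (a : Fin m → ZMod 2) : a + a = 0 := by
  funext i
  simp only [Pi.add_apply, Pi.zero_apply]
  generalize a i = u
  revert u; decide

lemma zmod2_quad_aux (A B C D : ZMod 2) (h : A + B + C + D = 0) :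
    A + D = (B + D) + (C + D) := by
  revert h; revert A B C D; decide

lemma quad_char_sum (q : (Fin m → ZMod 2) → ZMod 2) (hq : Pol q) :
    ∃ e : ℕ, e ≤ m ∧ ((∑ x : Fin m → ZMod 2, chi (q x)) = 0 ∨
      (∑ x : Fin m → ZMod 2, chi (q x)) = 2 ^ e ∨
      (∑ x : Fin m → ZMod 2, chi (q x)) = -(2 ^ e)) := by
  classical
  set S : ℤ := ∑ x : Fin m → ZMod 2, chi (q x) with hS
  set V : Finset (Fin m → ZMod 2) := Finset.univ.filter (fun d => ∀ x, lform q d x = 0) with hV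
  -- Step 1 : S * S = 2^m * T
  have key : S * S = 2 ^ m * ∑ d ∈ V, chi (q d + q 0) := by
    have step1 : S * S = ∑ x : Fin m → ZMod 2, ∑ y : Fin m → ZMod 2, chi (q x + q y) := by
      rw [Finset.sum_mul_sum]
      simp only [chi_add]
    have step2 : ∀ x : Fin m → ZMod 2,
        (∑ y : Fin m → ZMod 2, chi (q x + q y)) = ∑ d : Fin m → ZMod 2, chi (q x + q (x + d)) := by
      intro x
      exact (Fintype.sum_equiv (Equiv.addLeft x) _ _ (fun d => rfl)).symm
    have step3 : ∀ x d : Fin m → ZMod 2,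
        chi (q x + q (x + d)) = chi (lform q d x) * chi (q d + q 0) := by
      intro x d
      rw [← chi_add]
      congr 1
      unfold lform
      generalize q (x + d) = A
      generalize q x = B
      generalize q d = C
      generalize q 0 = D
      revert A B C D; decide
    rw [step1]
    simp only [step2, step3]
    rw [Finset.sum_comm]
    have step4 : ∀ d : Fin m → ZMod 2,
        (∑ x : Fin m → ZMod 2, chi (lform q d x) * chi (q d + q 0))
          = (if (∀ x, lform q d x = 0) then (2:ℤ) ^ m else 0) * chi (q d + q 0) := by
      intro d
      rw [← Finset.sum_mul]
      congr 1
      rw [sum_chi_additive (lform q d) (lform_addx hq d)]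
      simp [Fintype.card_fun]
    simp only [step4, ite_mul, zero_mul]
    rw [← Finset.sum_filter, Finset.mul_sum]
  -- Step 2 : T = card V or 0
  have hT : (∑ d ∈ V, chi (q d + q 0)) = (V.card : ℤ) ∨ (∑ d ∈ V, chi (q d + q 0)) = 0 := by
    by_cases hc : ∀ d ∈ V, q d + q 0 = 0
    · left
      rw [Finset.sum_congr rfl (fun d hd => by rw [hc d hd, chi_zero])]
      simp
    · right
      push_neg at hc
      obtain ⟨d₀, hd₀V, hd₀⟩ := hc
      have h1 : q d₀ + q 0 = 1 := zmod2_ne_zero hd₀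
      have hmemV : ∀ d, d ∈ V ↔ ∀ x, lform q d x = 0 := by
        intro d; simp [hV]
      have hclose : ∀ d ∈ V, d + d₀ ∈ V := by
        intro d hd
        rw [hmemV] at hd ⊢
        intro x
        rw [lform_addd hq, hd x, (hmemV d₀).mp hd₀V x, add_zero]
      have hinv : ∀ d : Fin m → ZMod 2, d + d₀ + d₀ = d := by
        intro d; rw [add_assoc, pi_add_self, add_zero]
      have reindex : (∑ d ∈ V, chi (q d + q 0)) = ∑ d ∈ V, chi (q (d + d₀) + q 0) := by
        apply Finset.sum_nbij' (fun d => d + d₀) (fun d => d + d₀)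
        · exact hclose
        · exact hclose
        · intro a ha; exact hinv a
        · intro a ha; exact hinv a
        · intro a ha; rw [hinv a]
      have split : ∀ d ∈ V, chi (q (d + d₀) + q 0) = chi (q d + q 0) * chi (q d₀ + q 0) := by
        intro d hd
        rw [← chi_add]
        congr 1
        have hl : lform q d₀ d = 0 := (hmemV d₀).mp hd₀V d
        unfold lform at hl
        exact zmod2_quad_aux _ _ _ _ hl
      rw [Finset.sum_congr rfl split] at reindex
      rw [h1] at reindex
      have : chi 1 = -1 := rfl
      rw [this] at reindex
      simp only [mul_neg, mul_one, Finset.sum_neg_distrib] at reindex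
      omega
  -- Step 3 : card V divides 2^m
  have hdvd : V.card ∣ 2 ^ m := by
    let Vsub : AddSubgroup (Fin m → ZMod 2) :=
      { carrier := {d | ∀ x, lform q d x = 0}
        zero_mem' := by
          intro x
          unfold lform
          rw [add_zero]
          generalize q x = A
          generalize q 0 = B
          revert A B; decide
        add_mem' := by
          intro a b ha hb x
          rw [lform_addd hq, ha x, hb x, add_zero]
        neg_mem' := by
          intro a ha
          have : -a = a := by
            funext i
            simp only [Pi.neg_apply]
            generalize a i = u
            revert u; decide
          rw [this]
          exact ha }
    have hcard1 : Nat.card Vsub ∣ Nat.card (Fin m → ZMod 2) :=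
      AddSubgroup.card_addSubgroup_dvd_card Vsub
    have hcard2 : Nat.card (Fin m → ZMod 2) = 2 ^ m := by
      rw [Nat.card_eq_fintype_card, Fintype.card_fun]
      simp
    have hcard3 : Nat.card Vsub = V.card := by
      rw [Nat.card_eq_fintype_card]
      rw [hV]
      rw [← Fintype.card_subtype]
      apply Fintype.card_congr
      exact Equiv.subtypeEquivRight (fun d => Iff.rfl)
    rw [← hcard3, ← hcard2]
    exact hcard1
  -- Step 4: conclude
  rcases hT with hT | hT
  · obtain ⟨w, hw, hcV⟩ := (Nat.dvd_prime_pow Nat.prime_two).mp hdvd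
    have hSS : S * S = 2 ^ (m + w) := by
      rw [key, hT, hcV, pow_add]
      push_cast
      ring
    have habs : S.natAbs * S.natAbs = 2 ^ (m + w) := by
      have := Int.natAbs_mul_self (a := S)
      have h2 : ((S.natAbs * S.natAbs : ℕ) : ℤ) = ((2 ^ (m + w) : ℕ) : ℤ) := by
        rw [this, hSS]; push_cast; ring
      exact_mod_cast h2
    have hdvd2 : S.natAbs ∣ 2 ^ (m + w) := ⟨S.natAbs, habs.symm⟩
    obtain ⟨e, he, hne⟩ := (Nat.dvd_prime_pow Nat.prime_two).mp hdvd2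
    have hSbound : S.natAbs ≤ 2 ^ m := by
      have h1 : |S| ≤ ∑ x : Fin m → ZMod 2, |chi (q x)| := Finset.abs_sum_le_sum_abs _ _
      simp only [abs_chi] at h1
      rw [Finset.sum_const, Finset.card_univ, Fintype.card_fun] at h1
      simp at h1
      rw [Int.abs_eq_natAbs] at h1
      exact_mod_cast h1
    have hem : e ≤ m := by
      rw [hne] at hSbound
      exact (Nat.pow_le_pow_iff_right (by norm_num)).mp hSbound
    refine ⟨e, hem, ?_⟩
    rcases Int.natAbs_eq S with h | h
    · right; left; rw [h, hne]; push_cast; ring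
    · right; right; rw [h, hne]; push_cast; ring
  · refine ⟨0, Nat.zero_le m, Or.inl ?_⟩
    have : S * S = 0 := by rw [key, hT, mul_zero]
    exact mul_self_eq_zero.mp this
lemma pi_add_eq_zero_iff {r : ℕ} (z w : Fin r → ZMod 2) : z + w = 0 ↔ z = w := by
  constructor
  · intro h
    have : z + (w + w) = (z + w) + w := by abel
    rw [pi_add_self, add_zero, h, zero_add] at this
    exact this
  · intro h; rw [h, pi_add_self]

lemma main_identity {m r : ℕ} (Q : Fin r → (Fin m → ZMod 2) → ZMod 2)
    (Γ : (Fin r → ZMod 2) → ZMod 2) (P : (Fin m → ZMod 2) → ZMod 2)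
    (hP : ∀ x, P x = Γ (fun j => Q j x)) :
    (∑ a : Fin r → ZMod 2,
      (∑ z : Fin r → ZMod 2, chi (Γ z + dot a z)) * (∑ x : Fin m → ZMod 2, chi (dot a (fun j => Q j x))))
      = 2 ^ r * ∑ x : Fin m → ZMod 2, chi (P x) := by
  have expand : ∀ a : Fin r → ZMod 2,
      (∑ z : Fin r → ZMod 2, chi (Γ z + dot a z)) * (∑ x : Fin m → ZMod 2, chi (dot a (fun j => Q j x)))
      = ∑ z : Fin r → ZMod 2, ∑ x : Fin m → ZMod 2,
          chi (Γ z) * chi (dot a (z + fun j => Q j x)) := by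
    intro a
    rw [Finset.sum_mul_sum]
    apply Finset.sum_congr rfl; intro z _
    apply Finset.sum_congr rfl; intro x _
    rw [chi_add, mul_assoc, ← chi_add, dot_add_right]
  simp only [expand]
  rw [Finset.sum_comm]
  have inner : ∀ z : Fin r → ZMod 2,
      (∑ a : Fin r → ZMod 2, ∑ x : Fin m → ZMod 2, chi (Γ z) * chi (dot a (z + fun j => Q j x)))
       = ∑ x : Fin m → ZMod 2, chi (Γ z) * (if z = (fun j => Q j x) then 2 ^ r else 0) := by
    intro z
    rw [Finset.sum_comm]
    apply Finset.sum_congr rfl; intro x _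
    rw [← Finset.mul_sum, sum_chi_dot]
    congr 1
    exact if_congr (pi_add_eq_zero_iff _ _) rfl rfl
  simp only [inner]
  rw [Finset.sum_comm]
  rw [Finset.mul_sum]
  apply Finset.sum_congr rfl; intro x _
  simp only [mul_ite, mul_zero]
  rw [Finset.sum_ite_eq' Finset.univ (fun j => Q j x) (fun z => chi (Γ z) * 2 ^ r)]
  simp [hP, mul_comm]



lemma one_add_sum_le_prod {ι : Type*} (s : Finset ι) (f : ι → ℝ) (hf : ∀ i ∈ s, 0 ≤ f i) :
    1 + ∑ i ∈ s, f i ≤ ∏ i ∈ s, (1 + f i) := by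
  classical
  induction s using Finset.cons_induction with
  | empty => simp
  | cons a s ha ih =>
    rw [Finset.sum_cons, Finset.prod_cons]
    have h1 : 0 ≤ f a := hf a (Finset.mem_cons_self a s)
    have h2 : ∀ i ∈ s, 0 ≤ f i := fun i hi => hf i (Finset.mem_cons.mpr (Or.inr hi))
    have h3 := ih h2
    have h4 : 0 ≤ ∑ i ∈ s, f i := Finset.sum_nonneg h2
    nlinarith

lemma one_le_prod_real {ι : Type*} (s : Finset ι) (f : ι → ℝ) (h : ∀ i ∈ s, 1 ≤ f i) :
    1 ≤ ∏ i ∈ s, f i := by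
  classical
  induction s using Finset.cons_induction with
  | empty => simp
  | cons a s ha ih =>
    rw [Finset.prod_cons]
    have h1 : 1 ≤ f a := h a (Finset.mem_cons_self a s)
    have h2 : 1 ≤ ∏ i ∈ s, f i := ih (fun i hi => h i (Finset.mem_cons.mpr (Or.inr hi)))
    nlinarith

lemma prod_le_prod_subset_real {ι : Type*} [DecidableEq ι] (s t : Finset ι) (hsub : s ⊆ t)
    (f : ι → ℝ) (h1 : ∀ i ∈ t, 1 ≤ f i) : ∏ i ∈ s, f i ≤ ∏ i ∈ t, f i := by
  rw [← Finset.prod_sdiff hsub]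
  have hs : 1 ≤ ∏ i ∈ t \ s, f i :=
    one_le_prod_real _ _ (fun i hi => h1 i (Finset.mem_sdiff.mp hi).1)
  have hnn : 0 ≤ ∏ i ∈ s, f i :=
    Finset.prod_nonneg (fun i hi => le_trans zero_le_one (h1 i (hsub hi)))
  exact le_mul_of_one_le_left hnn hs

lemma exp_half_lt_two : Real.exp (1/2) < 2 := by
  have h1 : Real.exp (1/2) * Real.exp (1/2) = Real.exp 1 := by
    rw [← Real.exp_add]; norm_num
  have h2 : Real.exp 1 < 2.7182818286 := Real.exp_one_lt_d9
  nlinarith [Real.exp_pos (1/2 : ℝ)]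

lemma select_cut {ι : Type*} [DecidableEq ι] (r t m : ℕ) (ht : 0 < t)
    (F : Finset ι) (h w : ι → ℕ)
    (hcard : (F.filter fun a => 1 ≤ h a).card ≤ 2 ^ r - 1)
    (hw : ∀ a ∈ F, w a ≤ 2 ^ r)
    (hh : ∀ a ∈ F, h a ≤ m) :
    ∃ c : ℕ, c ≤ m ∧ c ≤ (r + t) * 2 ^ r ∧
      2 ^ (t + c) * (∑ a ∈ F.filter (fun a => c < h a), w a * 2 ^ (m - h a)) ≤ 2 ^ m := by
  classical
  let Tn : ℕ → ℕ := fun c => ∑ a ∈ F.filter (fun a => c < h a), w a * 2 ^ (m - h a)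
  let Mc : ℕ → ℕ := fun c => ∑ a ∈ F.filter (fun a => h a = c), w a
  have hgood_m : 2 ^ (t + m) * Tn m ≤ 2 ^ m := by
    have h0 : Tn m = 0 := by
      show (∑ a ∈ F.filter (fun a => m < h a), w a * 2 ^ (m - h a)) = 0
      rw [Finset.filter_false_of_mem, Finset.sum_empty]
      intro a ha
      exact not_lt.mpr (hh a ha)
    rw [h0, mul_zero]
    exact Nat.zero_le _
  have hex : ∃ c, 2 ^ (t + c) * Tn c ≤ 2 ^ m := ⟨m, hgood_m⟩
  let c₀ := Nat.find hex
  have hgood : 2 ^ (t + c₀) * Tn c₀ ≤ 2 ^ m := Nat.find_spec hex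
  have hbad : ∀ c < c₀, 2 ^ m < 2 ^ (t + c) * Tn c := by
    intro c hc
    exact Nat.lt_of_not_le (Nat.find_min hex hc)
  have hc₀m : c₀ ≤ m := Nat.find_le hgood_m
  rcases Nat.eq_zero_or_pos c₀ with h0 | hpos
  · exact ⟨c₀, hc₀m, by rw [h0]; exact Nat.zero_le _, hgood⟩
  -- recurrence
  have hrec : ∀ c, c + 1 ≤ m → Tn c = Tn (c+1) + Mc (c+1) * 2 ^ (m - (c+1)) := by
    intro c hcm
    have hsplit : F.filter (fun a => c < h a)
        = (F.filter (fun a => h a = c + 1)) ∪ (F.filter (fun a => c + 1 < h a)) := by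
      ext a
      simp only [Finset.mem_filter, Finset.mem_union]
      constructor
      · rintro ⟨haF, hlt⟩
        rcases Nat.lt_or_ge (c+1) (h a) with h' | h'
        · exact Or.inr ⟨haF, h'⟩
        · exact Or.inl ⟨haF, by omega⟩
      · rintro (⟨haF, he⟩ | ⟨haF, hlt⟩)
        · exact ⟨haF, by omega⟩
        · exact ⟨haF, by omega⟩
    have hdisj : Disjoint (F.filter (fun a => h a = c + 1)) (F.filter (fun a => c + 1 < h a)) := by
      rw [Finset.disjoint_left]
      intro a ha ha'
      have h1 := (Finset.mem_filter.mp ha).2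
      have h2 := (Finset.mem_filter.mp ha').2
      omega
    show (∑ a ∈ F.filter (fun a => c < h a), w a * 2 ^ (m - h a)) = _
    rw [hsplit, Finset.sum_union hdisj]
    have heq : ∑ a ∈ F.filter (fun a => h a = c + 1), w a * 2 ^ (m - h a)
        = Mc (c+1) * 2 ^ (m - (c+1)) := by
      show _ = (∑ a ∈ F.filter (fun a => h a = c + 1), w a) * 2 ^ (m - (c+1))
      rw [Finset.sum_mul]
      apply Finset.sum_congr rfl
      intro a ha
      rw [(Finset.mem_filter.mp ha).2]
    rw [heq]
    exact Nat.add_comm _ _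
  -- real-valued induction
  let G : ℕ → ℝ := fun c => 1 + 2 ^ t * (Mc c : ℝ)
  have hGone : ∀ c, (1:ℝ) ≤ G c := by
    intro c
    show (1:ℝ) ≤ 1 + 2 ^ t * (Mc c : ℝ)
    have : (0:ℝ) ≤ 2 ^ t * (Mc c : ℝ) := by positivity
    linarith
  have hProdone : ∀ s : Finset ℕ, (1:ℝ) ≤ ∏ c ∈ s, G c :=
    fun s => one_le_prod_real s G (fun c _ => hGone c)
  have claim : ∀ i : ℕ, i + 1 ≤ c₀ →
      (2:ℝ) ^ (i + 1 + m) ≤ ((2:ℝ) ^ (t + (i+1)) * (Tn (i+1) : ℝ) + 2 ^ t * (Mc (i+1) : ℝ) * 2 ^ m)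
        * ∏ c ∈ Finset.Icc 1 i, G c := by
    intro i
    induction i with
    | zero =>
      intro h1
      have hb : (2:ℝ) ^ m < 2 ^ (t + 0) * (Tn 0 : ℝ) := by
        exact_mod_cast hbad 0 h1
      have hm1 : 1 ≤ m := le_trans h1 hc₀m
      have hr : (Tn 0 : ℝ) = (Tn 1 : ℝ) + (Mc 1 : ℝ) * 2 ^ (m - 1) := by
        exact_mod_cast congrArg (Nat.cast (R := ℝ)) (hrec 0 hm1)
      have hIcc : Finset.Icc 1 0 = (∅ : Finset ℕ) := by
        apply Finset.Icc_eq_empty; omega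
      rw [hIcc, Finset.prod_empty, mul_one]
      rw [hr] at hb
      obtain ⟨k, hk⟩ : ∃ k, m = k + 1 := ⟨m - 1, by omega⟩
      rw [hk] at hb ⊢
      simp only [Nat.add_sub_cancel] at hb ⊢
      have hb2 : (2:ℝ) ^ (k+1) < 2 ^ t * ((Tn 1 : ℝ) + (Mc 1 : ℝ) * 2 ^ k) := by
        calc (2:ℝ) ^ (k+1) = 2 ^ (t+0) / 2 ^ (t+0) * 2 ^ (k+1) := by
              rw [div_self (by positivity)]; ring
          _ = 2 ^ (k+1) := by rw [div_self (by positivity)]; ring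
          _ < _ := hb
      have ea : (2:ℝ) ^ (0 + 1 + (k + 1)) = 2 * 2 ^ (k+1) := by ring
      have ebb : (2:ℝ) ^ (t + (0 + 1)) * (Tn (0+1) : ℝ) = 2 ^ t * (Tn 1 : ℝ) * 2 := by
        norm_num; ring
      have ec : (2:ℝ) ^ t * (Mc (0+1) : ℝ) * 2 ^ (k + 1) = 2 ^ t * ((Mc 1 : ℝ) * 2 ^ k) * 2 := by
        norm_num; ring
      rw [ea, ebb, ec]
      nlinarith [hb2]
    | succ i ih =>
      intro h1
      have hclaim := ih (by omega)
      have hb : (2:ℝ) ^ m < 2 ^ (t + (i+1)) * (Tn (i+1) : ℝ) := by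
        exact_mod_cast hbad (i+1) (by omega)
      have hr : (Tn (i+1) : ℝ) = (Tn (i+2) : ℝ) + (Mc (i+2) : ℝ) * 2 ^ (m - (i+2)) := by
        exact_mod_cast congrArg (Nat.cast (R := ℝ)) (hrec (i+1) (by omega))
      have hProd : (1:ℝ) ≤ ∏ c ∈ Finset.Icc 1 i, G c := hProdone _
      have hXY : (2:ℝ) ^ (t + (i+1)) * (Tn (i+1) : ℝ) + 2 ^ t * (Mc (i+1) : ℝ) * 2 ^ m
          ≤ ((2:ℝ) ^ (t + (i+1)) * (Tn (i+1) : ℝ)) * G (i+1) := by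
        show _ ≤ _ * (1 + 2 ^ t * (Mc (i+1) : ℝ))
        have hM : (0:ℝ) ≤ 2 ^ t * (Mc (i+1) : ℝ) := by positivity
        nlinarith
      have step1 : (2:ℝ) ^ (i + 1 + m)
          ≤ ((2:ℝ) ^ (t + (i+1)) * (Tn (i+1) : ℝ)) * ∏ c ∈ Finset.Icc 1 (i+1), G c := by
        rw [Finset.prod_Icc_succ_top (by omega : 1 ≤ i + 1)]
        calc (2:ℝ) ^ (i + 1 + m)
            ≤ ((2:ℝ) ^ (t + (i+1)) * (Tn (i+1) : ℝ) + 2 ^ t * (Mc (i+1) : ℝ) * 2 ^ m)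
              * ∏ c ∈ Finset.Icc 1 i, G c := hclaim
          _ ≤ (((2:ℝ) ^ (t + (i+1)) * (Tn (i+1) : ℝ)) * G (i+1)) * ∏ c ∈ Finset.Icc 1 i, G c := by
              apply mul_le_mul_of_nonneg_right hXY (le_trans zero_le_one hProd)
          _ = ((2:ℝ) ^ (t + (i+1)) * (Tn (i+1) : ℝ)) * ((∏ c ∈ Finset.Icc 1 i, G c) * G (i+1)) := by
              ring
      -- multiply by 2
      have hrw : (2:ℝ) * ((2:ℝ) ^ (t + (i+1)) * (Tn (i+1) : ℝ))
          = (2:ℝ) ^ (t + (i+2)) * (Tn (i+2) : ℝ) + 2 ^ t * (Mc (i+2) : ℝ) * 2 ^ m := by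
        rw [hr]
        obtain ⟨k, hk⟩ : ∃ k, m = k + (i+2) := ⟨m - (i+2), by omega⟩
        rw [hk]
        simp only [Nat.add_sub_cancel]
        ring
      calc (2:ℝ) ^ (i + 1 + 1 + m) = 2 * (2:ℝ) ^ (i + 1 + m) := by
            rw [← pow_succ']
            congr 1
            omega
        _ ≤ 2 * (((2:ℝ) ^ (t + (i+1)) * (Tn (i+1) : ℝ)) * ∏ c ∈ Finset.Icc 1 (i+1), G c) := by
            linarith [step1]
        _ = (2 * ((2:ℝ) ^ (t + (i+1)) * (Tn (i+1) : ℝ))) * ∏ c ∈ Finset.Icc 1 (i+1), G c := by ring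
        _ = _ := by rw [hrw]
  -- conclusion of telescoping
  have htel : (2:ℝ) ^ c₀ ≤ ∏ c ∈ Finset.Icc 1 c₀, G c := by
    obtain ⟨i, hi⟩ : ∃ i, c₀ = i + 1 := ⟨c₀ - 1, by omega⟩
    have hcl := claim i (by omega)
    have hgood' : 2 ^ (t + (i+1)) * Tn (i+1) ≤ 2 ^ m := by rw [← hi]; exact hgood
    have hgoodR : (2:ℝ) ^ (t + (i+1)) * (Tn (i+1) : ℝ) ≤ 2 ^ m := by exact_mod_cast hgood'
    have hMc0 : (0:ℝ) ≤ 2 ^ t * (Mc (i+1) : ℝ) := by positivity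
    have hProd : (1:ℝ) ≤ ∏ c ∈ Finset.Icc 1 i, G c := hProdone _
    have h2 : (2:ℝ) ^ (t + (i+1)) * (Tn (i+1) : ℝ) + 2 ^ t * (Mc (i+1) : ℝ) * 2 ^ m
        ≤ 2 ^ m * G (i+1) := by
      show _ ≤ (2:ℝ) ^ m * (1 + 2 ^ t * (Mc (i+1) : ℝ))
      nlinarith
    have hfin : (2:ℝ) ^ ((i+1) + m) ≤ 2 ^ m * ∏ c ∈ Finset.Icc 1 (i+1), G c := by
      rw [Finset.prod_Icc_succ_top (by omega : 1 ≤ i + 1)]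
      calc (2:ℝ) ^ ((i+1) + m)
          ≤ ((2:ℝ) ^ (t + (i+1)) * (Tn (i+1) : ℝ) + 2 ^ t * (Mc (i+1) : ℝ) * 2 ^ m)
            * ∏ c ∈ Finset.Icc 1 i, G c := hcl
        _ ≤ (2 ^ m * G (i+1)) * ∏ c ∈ Finset.Icc 1 i, G c :=
            mul_le_mul_of_nonneg_right h2 (le_trans zero_le_one hProd)
        _ = 2 ^ m * ((∏ c ∈ Finset.Icc 1 i, G c) * G (i+1)) := by ring
    rw [hi]
    have h2m : (0:ℝ) < 2 ^ m := by positivity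
    rw [pow_add] at hfin
    have hfin2 : (2:ℝ) ^ (i+1) * 2 ^ m ≤ (∏ c ∈ Finset.Icc 1 (i+1), G c) * 2 ^ m := by
      linarith [hfin]
    exact le_of_mul_le_mul_right hfin2 h2m
  -- bound the product by per-element factors
  have hA : ∀ c, G c ≤ ∏ a ∈ F.filter (fun a => h a = c), (1 + 2 ^ t * (w a : ℝ)) := by
    intro c
    show 1 + 2 ^ t * (Mc c : ℝ) ≤ _
    have hMeq : (Mc c : ℝ) = ∑ a ∈ F.filter (fun a => h a = c), (w a : ℝ) := by
      show ((∑ a ∈ F.filter (fun a => h a = c), w a : ℕ) : ℝ) = _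
      push_cast
      rfl
    rw [hMeq, Finset.mul_sum]
    exact one_add_sum_le_prod _ _ (fun i _ => by positivity)
  have hB : (∏ c ∈ Finset.Icc 1 c₀, G c)
      ≤ ∏ c ∈ Finset.Icc 1 c₀, ∏ a ∈ F.filter (fun a => h a = c), (1 + 2 ^ t * (w a : ℝ)) :=
    Finset.prod_le_prod (fun c _ => le_trans zero_le_one (hGone c)) (fun c _ => hA c)
  have hdisj2 : Set.PairwiseDisjoint (↑(Finset.Icc 1 c₀) : Set ℕ)
      (fun c => F.filter (fun a => h a = c)) := by
    intro c _ c' _ hne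
    rw [Function.onFun, Finset.disjoint_left]
    intro a ha ha'
    have h1 := (Finset.mem_filter.mp ha).2
    have h2 := (Finset.mem_filter.mp ha').2
    exact hne (by omega)
  have hbiU : (Finset.Icc 1 c₀).biUnion (fun c => F.filter (fun a => h a = c))
      = F.filter (fun a => 1 ≤ h a ∧ h a ≤ c₀) := by
    ext a
    simp only [Finset.mem_biUnion, Finset.mem_Icc, Finset.mem_filter]
    constructor
    · rintro ⟨c, ⟨hc1, hc2⟩, haF, he⟩
      exact ⟨haF, by omega⟩
    · rintro ⟨haF, h1, h2⟩
      exact ⟨h a, ⟨h1, h2⟩, haF, rfl⟩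
  have hC : ∏ c ∈ Finset.Icc 1 c₀, ∏ a ∈ F.filter (fun a => h a = c), (1 + 2 ^ t * (w a : ℝ))
      = ∏ a ∈ F.filter (fun a => 1 ≤ h a ∧ h a ≤ c₀), (1 + 2 ^ t * (w a : ℝ)) := by
    rw [← hbiU, Finset.prod_biUnion hdisj2]
  have hD : ∏ a ∈ F.filter (fun a => 1 ≤ h a ∧ h a ≤ c₀), (1 + 2 ^ t * (w a : ℝ))
      ≤ ∏ a ∈ F.filter (fun a => 1 ≤ h a), (1 + 2 ^ t * (w a : ℝ)) := by
    apply prod_le_prod_subset_real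
    · intro a ha
      simp only [Finset.mem_filter] at ha ⊢
      exact ⟨ha.1, ha.2.1⟩
    · intro a _
      have : (0:ℝ) ≤ 2 ^ t * (w a : ℝ) := by positivity
      linarith
  have hE : ∏ a ∈ F.filter (fun a => 1 ≤ h a), (1 + 2 ^ t * (w a : ℝ))
      ≤ (1 + 2 ^ (t + r)) ^ (2 ^ r - 1) := by
    calc ∏ a ∈ F.filter (fun a => 1 ≤ h a), (1 + 2 ^ t * (w a : ℝ))
        ≤ ∏ _a ∈ F.filter (fun a => 1 ≤ h a), (1 + (2:ℝ) ^ (t + r)) := by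
          apply Finset.prod_le_prod
          · intro a _; positivity
          · intro a ha
            have hwa : (w a : ℝ) ≤ 2 ^ r := by
              exact_mod_cast hw a (Finset.mem_filter.mp ha).1
            have hmul : (2:ℝ) ^ t * (w a : ℝ) ≤ 2 ^ t * 2 ^ r :=
              mul_le_mul_of_nonneg_left hwa (by positivity)
            rw [pow_add]
            linarith
      _ = (1 + (2:ℝ) ^ (t + r)) ^ (F.filter (fun a => 1 ≤ h a)).card :=
          Finset.prod_const _
      _ ≤ (1 + 2 ^ (t + r)) ^ (2 ^ r - 1) := by
          apply pow_le_pow_right₀ ?_ hcard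
          have : (0:ℝ) ≤ 2 ^ (t+r) := by positivity
          linarith
  have hE2 : (1 + (2:ℝ) ^ (t + r)) ^ (2 ^ r - 1) ≤ 2 ^ ((t + r) * (2 ^ r - 1)) * 2 := by
    have heps : (1 + (2:ℝ) ^ (t + r)) = 2 ^ (t + r) * (1 + ((2:ℝ) ^ (t + r))⁻¹) := by
      have hne : ((2:ℝ) ^ (t + r)) ≠ 0 := by positivity
      field_simp
      ring
    rw [heps, mul_pow, pow_mul]
    apply mul_le_mul_of_nonneg_left ?_ (by positivity)
    -- (1+ε)^K ≤ 2
    have hε : (0:ℝ) ≤ ((2:ℝ) ^ (t + r))⁻¹ := by positivity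
    have h1 : (1 + ((2:ℝ) ^ (t + r))⁻¹) ≤ Real.exp (((2:ℝ) ^ (t + r))⁻¹) := by
      have := Real.add_one_le_exp (((2:ℝ) ^ (t + r))⁻¹)
      linarith
    have h2 : (1 + ((2:ℝ) ^ (t + r))⁻¹) ^ (2 ^ r - 1)
        ≤ Real.exp (((2:ℝ) ^ (t + r))⁻¹) ^ (2 ^ r - 1) :=
      pow_le_pow_left₀ (by linarith) h1 _
    have h3 : Real.exp (((2:ℝ) ^ (t + r))⁻¹) ^ (2 ^ r - 1)
        = Real.exp (((2 ^ r - 1 : ℕ) : ℝ) * ((2:ℝ) ^ (t + r))⁻¹) := by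
      rw [Real.exp_nat_mul]
    have h4 : ((2 ^ r - 1 : ℕ) : ℝ) * ((2:ℝ) ^ (t + r))⁻¹ ≤ 1 / 2 := by
      have hKr : ((2 ^ r - 1 : ℕ) : ℝ) ≤ 2 ^ r := by
        have : (2 ^ r - 1 : ℕ) ≤ 2 ^ r := Nat.sub_le _ _
        calc ((2 ^ r - 1 : ℕ) : ℝ) ≤ ((2 ^ r : ℕ) : ℝ) := by exact_mod_cast this
          _ = 2 ^ r := by push_cast; ring
      have step1 : ((2 ^ r - 1 : ℕ) : ℝ) * ((2:ℝ) ^ (t + r))⁻¹ ≤ 2 ^ r * ((2:ℝ) ^ (t + r))⁻¹ :=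
        mul_le_mul_of_nonneg_right hKr hε
      have step2 : (2:ℝ) ^ r * ((2:ℝ) ^ (t + r))⁻¹ = ((2:ℝ) ^ t)⁻¹ := by
        rw [pow_add]
        have h1 : ((2:ℝ) ^ t) ≠ 0 := by positivity
        have h2 : ((2:ℝ) ^ r) ≠ 0 := by positivity
        field_simp
      have h2t : (2:ℝ) ≤ 2 ^ t := by
        calc (2:ℝ) = 2 ^ 1 := (pow_one 2).symm
          _ ≤ 2 ^ t := pow_le_pow_right₀ one_le_two ht
      have step3 : ((2:ℝ) ^ t)⁻¹ ≤ 1 / 2 := by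
        rw [one_div]
        exact inv_anti₀ (by norm_num) h2t
      calc ((2 ^ r - 1 : ℕ) : ℝ) * ((2:ℝ) ^ (t + r))⁻¹ ≤ 2 ^ r * ((2:ℝ) ^ (t + r))⁻¹ := step1
        _ = ((2:ℝ) ^ t)⁻¹ := step2
        _ ≤ 1 / 2 := step3
    calc (1 + ((2:ℝ) ^ (t + r))⁻¹) ^ (2 ^ r - 1)
        ≤ Real.exp (((2:ℝ) ^ (t + r))⁻¹) ^ (2 ^ r - 1) := h2
      _ = Real.exp (((2 ^ r - 1 : ℕ) : ℝ) * ((2:ℝ) ^ (t + r))⁻¹) := h3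
      _ ≤ Real.exp (1 / 2) := Real.exp_le_exp.mpr h4
      _ ≤ 2 := le_of_lt exp_half_lt_two
  -- conclude c₀ ≤ (r+t) * 2^r
  have hc₀bound : c₀ ≤ (r + t) * 2 ^ r := by
    have hchain : (2:ℝ) ^ c₀ ≤ 2 ^ ((t + r) * (2 ^ r - 1) + 1) := by
      calc (2:ℝ) ^ c₀ ≤ ∏ c ∈ Finset.Icc 1 c₀, G c := htel
        _ ≤ ∏ c ∈ Finset.Icc 1 c₀, ∏ a ∈ F.filter (fun a => h a = c), (1 + 2 ^ t * (w a : ℝ)) := hB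
        _ = ∏ a ∈ F.filter (fun a => 1 ≤ h a ∧ h a ≤ c₀), (1 + 2 ^ t * (w a : ℝ)) := hC
        _ ≤ ∏ a ∈ F.filter (fun a => 1 ≤ h a), (1 + 2 ^ t * (w a : ℝ)) := hD
        _ ≤ (1 + 2 ^ (t + r)) ^ (2 ^ r - 1) := hE
        _ ≤ 2 ^ ((t + r) * (2 ^ r - 1)) * 2 := hE2
        _ = 2 ^ ((t + r) * (2 ^ r - 1) + 1) := by rw [pow_succ]
    have hle : c₀ ≤ (t + r) * (2 ^ r - 1) + 1 := by
      by_contra hcon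
      push_neg at hcon
      have := pow_lt_pow_right₀ (by norm_num : (1:ℝ) < 2) hcon
      linarith
    have h2r : 1 ≤ 2 ^ r := Nat.one_le_two_pow
    have hmul : (t + r) * (2 ^ r - 1) + (t + r) = (t + r) * 2 ^ r := by
      rw [← Nat.mul_succ]
      congr 1
      omega
    have hfin : (t + r) * (2 ^ r - 1) + 1 ≤ (t + r) * 2 ^ r := by omega
    have hcomm : (t + r) * 2 ^ r = (r + t) * 2 ^ r := by rw [Nat.add_comm]
    omega
  exact ⟨c₀, hc₀m, hc₀bound, hgood⟩

end RB

/-- the signed bias of a function of quadratic rank at most `r`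
is close to a dyadic number of bounded granularity. -/
theorem rank2_bias_near_dyadic :
    ∀ m r : ℕ, ∀ P : (Fin m → ZMod 2) → ZMod 2, RankLE 2 r P →
      ∀ t : ℕ, 0 < t →
        ∃ s : ℕ, s ≤ (r + t) * 2 ^ r + r ∧
          ∃ A : ℤ, |signedBias P - (A:ℝ) / 2 ^ s| ≤ ((2:ℝ) ^ t)⁻¹ * ((2:ℝ) ^ s)⁻¹ := by
  intro m r P hrank t ht
  classical
  obtain ⟨Q, Γ, hdeg, hP⟩ := hrank
  choose p hpd hpe using hdeg
  set S : ℤ := ∑ x : Fin m → ZMod 2, RB.chi (P x) with hS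
  set W : (Fin r → ZMod 2) → ℤ :=
    fun a => ∑ z : Fin r → ZMod 2, RB.chi (Γ z + RB.dot a z) with hW
  set b : (Fin r → ZMod 2) → ℤ :=
    fun a => ∑ x : Fin m → ZMod 2, RB.chi (RB.dot a (fun j => Q j x)) with hbdef
  have hid2 : (∑ a : Fin r → ZMod 2, W a * b a) = 2 ^ r * S := by
    rw [hW, hbdef, hS]
    exact RB.main_identity Q Γ P hP
  have hPol : ∀ a : Fin r → ZMod 2, RB.Pol (fun x => RB.dot a (fun j => Q j x)) := by
    intro a
    have heq : (fun x : Fin m → ZMod 2 => RB.dot a (fun j => Q j x))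
        = fun x => MvPolynomial.eval x (∑ j : Fin r, MvPolynomial.C (a j) * p j) := by
      funext x
      rw [map_sum]
      unfold RB.dot
      apply Finset.sum_congr rfl
      intro j _
      rw [map_mul, MvPolynomial.eval_C, hpe j x]
    rw [heq]
    apply RB.pol_eval
    apply le_trans (MvPolynomial.totalDegree_finset_sum _ _)
    apply Finset.sup_le
    intro j _
    calc (MvPolynomial.C (a j) * p j).totalDegree
        ≤ (MvPolynomial.C (a j)).totalDegree + (p j).totalDegree :=
          MvPolynomial.totalDegree_mul _ _
      _ ≤ 0 + 2 := Nat.add_le_add (le_of_eq (MvPolynomial.totalDegree_C _)) (hpd j)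
      _ = 2 := rfl
  have hbstruct : ∀ a : Fin r → ZMod 2,
      ∃ ee, ee ≤ m ∧ (b a = 0 ∨ b a = 2 ^ ee ∨ b a = -(2 ^ ee)) := by
    intro a
    obtain ⟨ee, hee, hc⟩ := RB.quad_char_sum _ (hPol a)
    refine ⟨ee, hee, ?_⟩
    rw [hbdef]
    exact hc
  choose e he hbe using hbstruct
  set F : Finset (Fin r → ZMod 2) := Finset.univ.filter (fun a => W a ≠ 0 ∧ b a ≠ 0) with hF
  set h : (Fin r → ZMod 2) → ℕ := fun a => m - e a with hh
  have hbF : ∀ a ∈ F, b a = 2 ^ (e a) ∨ b a = -(2 ^ (e a)) := by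
    intro a haF
    have hbne : b a ≠ 0 := ((Finset.mem_filter.mp haF).2).2
    rcases hbe a with h0 | h1 | h2
    · exact absurd h0 hbne
    · exact Or.inl h1
    · exact Or.inr h2
  have hcard2r : Fintype.card (Fin r → ZMod 2) = 2 ^ r := by
    rw [Fintype.card_fun]
    simp
  have hWbound : ∀ a : Fin r → ZMod 2, (W a).natAbs ≤ 2 ^ r := by
    intro a
    have h1 : |W a| ≤ ∑ z : Fin r → ZMod 2, |RB.chi (Γ z + RB.dot a z)| := by
      rw [hW]
      exact Finset.abs_sum_le_sum_abs _ _
    simp only [RB.abs_chi] at h1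
    rw [Finset.sum_const, Finset.card_univ, hcard2r] at h1
    have h2 : |W a| ≤ (2 ^ r : ℤ) := by simpa using h1
    rw [Int.abs_eq_natAbs] at h2
    exact_mod_cast h2
  have hcardF : (F.filter fun a => 1 ≤ h a).card ≤ 2 ^ r - 1 := by
    have hsub : (F.filter fun a => 1 ≤ h a) ⊆ Finset.univ.erase 0 := by
      intro a ha
      rw [Finset.mem_erase]
      refine ⟨?_, Finset.mem_univ a⟩
      intro ha0
      subst ha0
      have haF := (Finset.mem_filter.mp ha).1
      have hhe := (Finset.mem_filter.mp ha).2
      have hb0 : b 0 = 2 ^ m := by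
        rw [hbdef]
        have hz : ∀ x : Fin m → ZMod 2, RB.dot (0 : Fin r → ZMod 2) (fun j => Q j x) = 0 := by
          intro x; simp [RB.dot]
        simp only [hz]
        rw [Finset.sum_const, Finset.card_univ]
        have : Fintype.card (Fin m → ZMod 2) = 2 ^ m := by
          rw [Fintype.card_fun]; simp
        rw [this]
        simp [RB.chi_zero]
      rcases hbF 0 haF with h1 | h1
      · rw [hb0] at h1
        have hnat : (2:ℕ) ^ m = 2 ^ (e 0) := by exact_mod_cast h1
        have hem : e 0 = m := (Nat.pow_right_injective (le_refl 2) hnat).symm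
        rw [hh] at hhe
        simp only at hhe
        omega
      · rw [hb0] at h1
        have hp1 : (0:ℤ) < 2 ^ m := by positivity
        have hp2 : (0:ℤ) < 2 ^ (e 0) := by positivity
        omega
    calc (F.filter fun a => 1 ≤ h a).card ≤ (Finset.univ.erase (0 : Fin r → ZMod 2)).card :=
          Finset.card_le_card hsub
      _ = 2 ^ r - 1 := by
          rw [Finset.card_erase_of_mem (Finset.mem_univ _), Finset.card_univ, hcard2r]
  obtain ⟨c, hcm, hcbound, hgood⟩ := RB.select_cut r t m ht F h (fun a => (W a).natAbs)
      hcardF (fun a _ => hWbound a) (fun a _ => by show m - e a ≤ m; omega)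
  refine ⟨r + c, by omega, ?_⟩
  set σ : (Fin r → ZMod 2) → ℤ := fun a => if b a = 2 ^ (e a) then 1 else -1 with hσ
  have hbσ : ∀ a ∈ F, b a = σ a * 2 ^ (e a) := by
    intro a haF
    show b a = (if b a = 2 ^ (e a) then (1:ℤ) else -1) * 2 ^ (e a)
    rcases hbF a haF with h1 | h1
    · rw [if_pos h1, one_mul, h1]
    · have hne : b a ≠ 2 ^ (e a) := by
        rw [h1]
        have : (0:ℤ) < 2 ^ (e a) := by positivity
        omega
      rw [if_neg hne, h1]
      ring
  set A : ℤ := ∑ a ∈ F.filter (fun a => h a ≤ c), W a * σ a * 2 ^ (c - h a) with hA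
  refine ⟨A, ?_⟩
  -- split of total sum
  have hsum_univ : (∑ a : Fin r → ZMod 2, W a * b a) = ∑ a ∈ F, W a * b a := by
    refine (Finset.sum_subset (Finset.subset_univ F) ?_).symm
    intro a _ haF
    rw [hF] at haF
    simp only [Finset.mem_filter, Finset.mem_univ, true_and, not_and_or, not_not] at haF
    rcases haF with h1 | h1
    · rw [h1, zero_mul]
    · rw [h1, mul_zero]
  have hsplit : (∑ a ∈ F, W a * b a)
      = (∑ a ∈ F.filter (fun a => h a ≤ c), W a * b a)
        + (∑ a ∈ F.filter (fun a => c < h a), W a * b a) := by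
    rw [← Finset.sum_filter_add_sum_filter_not F (fun a => h a ≤ c)]
    congr 1
    apply Finset.sum_congr _ (fun _ _ => rfl)
    apply Finset.filter_congr
    intro a _
    simp [not_le]
  have hkept : (∑ a ∈ F.filter (fun a => h a ≤ c), W a * b a) = A * 2 ^ (m - c) := by
    rw [hA, Finset.sum_mul]
    apply Finset.sum_congr rfl
    intro a ha
    have haF := (Finset.mem_filter.mp ha).1
    have hahc := (Finset.mem_filter.mp ha).2
    rw [hbσ a haF]
    have hexp : (c - h a) + (m - c) = e a := by
      have h1 : h a = m - e a := rfl
      have h2 := he a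
      omega
    calc W a * (σ a * 2 ^ (e a)) = W a * σ a * 2 ^ ((c - h a) + (m - c)) := by
          rw [hexp]; ring
      _ = W a * σ a * 2 ^ (c - h a) * 2 ^ (m - c) := by
          rw [pow_add]; ring
  -- the dropped part
  set D : ℤ := ∑ a ∈ F.filter (fun a => c < h a), W a * b a with hD
  have hDval : D = 2 ^ r * S - A * 2 ^ (m - c) := by
    rw [hD, ← hid2, hsum_univ, hsplit, hkept]
    ring
  have hDbound : |D| * 2 ^ (t + c) ≤ 2 ^ m := by
    have h1 : |D| ≤ ((∑ a ∈ F.filter (fun a => c < h a), (W a).natAbs * 2 ^ (m - h a) : ℕ) : ℤ) := by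
      calc |D| ≤ ∑ a ∈ F.filter (fun a => c < h a), |W a * b a| := by
            rw [hD]; exact Finset.abs_sum_le_sum_abs _ _
        _ = ((∑ a ∈ F.filter (fun a => c < h a), (W a).natAbs * 2 ^ (m - h a) : ℕ) : ℤ) := by
            push_cast
            apply Finset.sum_congr rfl
            intro a ha
            have haF := (Finset.mem_filter.mp ha).1
            have hmh : m - h a = e a := by
              have h1 : h a = m - e a := rfl
              have h2 := he a
              omega
            have habs : |b a| = 2 ^ (e a) := by
              rcases hbF a haF with h1 | h1 <;> rw [h1]
              · exact abs_of_nonneg (by positivity)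
              · rw [abs_neg]; exact abs_of_nonneg (by positivity)
            rw [abs_mul, hmh, habs]
        _ = _ := rfl
    have h2 : ((2:ℤ) ^ (t + c)) * ((∑ a ∈ F.filter (fun a => c < h a), (W a).natAbs * 2 ^ (m - h a) : ℕ) : ℤ)
        ≤ 2 ^ m := by exact_mod_cast hgood
    have h3 : (0:ℤ) ≤ 2 ^ (t+c) := by positivity
    calc |D| * 2 ^ (t + c)
        ≤ ((∑ a ∈ F.filter (fun a => c < h a), (W a).natAbs * 2 ^ (m - h a) : ℕ) : ℤ) * 2 ^ (t+c) :=
          mul_le_mul_of_nonneg_right h1 h3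
      _ ≤ 2 ^ m := by linarith [h2]
  -- real arithmetic
  have hsb : signedBias P = (S : ℝ) / 2 ^ m := by
    unfold signedBias
    congr 1
    rw [hS]
    push_cast
    apply Finset.sum_congr rfl
    intro x _
    unfold RB.chi
    split_ifs <;> simp
  obtain ⟨k, hk⟩ : ∃ k, m = k + c := ⟨m - c, by omega⟩
  have hkey : signedBias P - (A:ℝ) / 2 ^ (r + c) = (D : ℝ) / 2 ^ (m + r) := by
    rw [hsb]
    have hDreal : (D:ℝ) = 2 ^ r * (S:ℝ) - (A:ℝ) * 2 ^ (m - c) := by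
      rw [hDval]; push_cast; ring
    rw [hDreal, hk]
    simp only [Nat.add_sub_cancel]
    have h2k : (0:ℝ) < 2 ^ k := by positivity
    have h2c : (0:ℝ) < 2 ^ c := by positivity
    have h2r : (0:ℝ) < 2 ^ r := by positivity
    field_simp
    ring
  rw [hkey, abs_div]
  have hpow_pos : (0:ℝ) < 2 ^ (m + r) := by positivity
  rw [abs_of_pos hpow_pos]
  rw [div_le_iff₀ hpow_pos]
  have hDR : |(D:ℝ)| * 2 ^ (t + c) ≤ 2 ^ m := by
    have := hDbound
    have hcast : |(D:ℝ)| = ((|D| : ℤ) : ℝ) := by push_cast; rfl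
    rw [hcast]
    exact_mod_cast this
  have hexpand : ((2:ℝ) ^ t)⁻¹ * ((2:ℝ) ^ (r + c))⁻¹ * 2 ^ (m + r)
      = 2 ^ m / 2 ^ (t + c) := by
    rw [hk]
    have h1 : (0:ℝ) < 2 ^ t := by positivity
    have h2 : (0:ℝ) < 2 ^ (r + c) := by positivity
    field_simp
    ring
  rw [hexpand]
  rw [le_div_iff₀ (by positivity : (0:ℝ) < 2 ^ (t + c))]
  exact hDR
end

section
/- Let D, T₁,…,T_k be probability distributions on a finite set X, let c₁,…,c_k > 0 with ∑_{i=1}^k c_i = 1, and let T = ∑_{i=1}^k c_i·T_i be their convex combination. Suppose that for each i, ‖D − T_i‖_TV = 1 − ε_i for some ε_i ∈ [0, 1/2]. Then ‖D − T‖_TV ≥ 1 − ∑_{i=1}^k (1 + c_i)·ε_i. -/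
open Finset

lemma pos_part_sum {X : Type*} [Fintype X] (f : X → ℝ) (h : ∑ x, f x = 0)
    [DecidablePred fun x => 0 < f x] :
    ∑ x ∈ univ.filter (fun x => 0 < f x), f x = (1/2) * ∑ x, |f x| := by
  have h1 := Finset.sum_filter_add_sum_filter_not univ (fun x => 0 < f x) f
  have h2 := Finset.sum_filter_add_sum_filter_not univ (fun x => 0 < f x) (fun x => |f x|)
  have e1 : ∑ x ∈ univ.filter (fun x => 0 < f x), |f x|
      = ∑ x ∈ univ.filter (fun x => 0 < f x), f x :=
    Finset.sum_congr rfl fun x hx => abs_of_pos (Finset.mem_filter.mp hx).2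
  have e2 : ∑ x ∈ univ.filter (fun x => ¬ 0 < f x), |f x|
      = -∑ x ∈ univ.filter (fun x => ¬ 0 < f x), f x := by
    rw [← Finset.sum_neg_distrib]
    exact Finset.sum_congr rfl fun x hx =>
      abs_of_nonpos (not_lt.mp (Finset.mem_filter.mp hx).2)
  linarith


/-- distance from a convex combination of distributions. -/
theorem tv_dist_from_convex_combination {X : Type*} [Fintype X] (k : ℕ)
    (D : X → ℝ) (T : Fin k → X → ℝ) (c : Fin k → ℝ) (ε : Fin k → ℝ)
    (hD0 : ∀ x, 0 ≤ D x) (hD1 : ∑ x, D x = 1)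
    (hT0 : ∀ i x, 0 ≤ T i x) (hT1 : ∀ i, ∑ x, T i x = 1)
    (hc : ∀ i, 0 < c i) (hcsum : ∑ i, c i = 1)
    (hε0 : ∀ i, 0 ≤ ε i) (hε1 : ∀ i, ε i ≤ 1/2)
    (htv : ∀ i, tvDist D (T i) = 1 - ε i) :
    tvDist D (fun x => ∑ i, c i * T i x) ≥ 1 - ∑ i, (1 + c i) * ε i := by
  classical
  set A : Fin k → Finset X := fun i => univ.filter (fun x => D x < T i x) with hA
  -- key identity for each i
  have key : ∀ i, ∑ x ∈ A i, (T i x - D x) = 1 - ε i := by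
    intro i
    have h0 : ∑ x, (T i x - D x) = 0 := by
      rw [Finset.sum_sub_distrib, hT1 i, hD1]; ring
    have hps := pos_part_sum (fun x => T i x - D x) h0
    have hfe : univ.filter (fun x => 0 < T i x - D x) = A i := by
      simp [hA, sub_pos]
    rw [hfe] at hps
    have habs : ∑ x, |T i x - D x| = ∑ x, |D x - T i x| :=
      Finset.sum_congr rfl fun x _ => abs_sub_comm _ _
    have h3 := htv i
    unfold tvDist at h3
    rw [hps, habs]
    linarith
  -- D(A i) ≤ ε i  and  T i (A i) ≥ 1 - ε i
  have hTi1 : ∀ i, ∑ x ∈ A i, T i x ≤ 1 := by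
    intro i
    rw [← hT1 i]
    exact Finset.sum_le_sum_of_subset_of_nonneg (Finset.subset_univ _)
      (fun x _ _ => hT0 i x)
  have hsplit : ∀ i, ∑ x ∈ A i, (T i x - D x) = (∑ x ∈ A i, T i x) - ∑ x ∈ A i, D x :=
    fun i => Finset.sum_sub_distrib _ _
  have hDAi : ∀ i, ∑ x ∈ A i, D x ≤ ε i := by
    intro i
    have := key i; rw [hsplit i] at this
    linarith [hTi1 i]
  have hDAi0 : ∀ i, 0 ≤ ∑ x ∈ A i, D x := fun i => Finset.sum_nonneg fun x _ => hD0 x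
  have hTAi : ∀ i, 1 - ε i ≤ ∑ x ∈ A i, T i x := by
    intro i
    have := key i; rw [hsplit i] at this
    linarith [hDAi0 i]
  -- the union set B
  set B : Finset X := univ.filter (fun x => ∃ i, D x < T i x) with hB
  have hsub : ∀ i, A i ⊆ B := by
    intro i x hx
    simp only [hA, Finset.mem_filter] at hx
    simp only [hB, Finset.mem_filter]
    exact ⟨Finset.mem_univ x, ⟨i, hx.2⟩⟩
  have hTiB : ∀ i, 1 - ε i ≤ ∑ x ∈ B, T i x := by
    intro i
    refine le_trans (hTAi i) (Finset.sum_le_sum_of_subset_of_nonneg (hsub i)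
      (fun x _ _ => hT0 i x))
  -- union bound for D
  have hDB : ∑ x ∈ B, D x ≤ ∑ i, ε i := by
    have step : ∑ x ∈ B, D x ≤ ∑ x ∈ B, ∑ i, (if x ∈ A i then D x else 0) := by
      refine Finset.sum_le_sum (f := D) (g := fun x => ∑ i, (if x ∈ A i then D x else 0)) fun x hx => ?_
      simp only [hB, Finset.mem_filter] at hx
      obtain ⟨i, hi⟩ := hx.2
      have hxAi : x ∈ A i := by simp [hA, hi]
      calc D x = (if x ∈ A i then D x else 0) := by simp [hxAi]
        _ ≤ ∑ j, (if x ∈ A j then D x else 0) := by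
            refine Finset.single_le_sum (f := fun j => if x ∈ A j then D x else 0) (fun j _ => ?_) (Finset.mem_univ i)
            show 0 ≤ (if x ∈ A j then D x else 0); split <;> simp [hD0 x]
    refine le_trans step ?_
    have step2 : ∑ x ∈ B, ∑ i, (if x ∈ A i then D x else 0)
        ≤ ∑ x, ∑ i, (if x ∈ A i then D x else 0) := by
      refine Finset.sum_le_sum_of_subset_of_nonneg (Finset.subset_univ _) ?_
      intro x _ _
      exact Finset.sum_nonneg fun i _ => by split <;> simp [hD0 x]
    refine le_trans step2 ?_
    rw [Finset.sum_comm]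
    refine Finset.sum_le_sum fun i _ => ?_
    have : ∑ x, (if x ∈ A i then D x else 0) = ∑ x ∈ A i, D x := by
      rw [Finset.sum_ite_mem, Finset.univ_inter]
    rw [this]; exact hDAi i
  -- the function g = T - D
  set g : X → ℝ := fun x => (∑ i, c i * T i x) - D x with hg
  have hgsum : ∑ x, g x = 0 := by
    have : ∑ x, ∑ i, c i * T i x = 1 := by
      rw [Finset.sum_comm]
      calc ∑ i, ∑ x, c i * T i x = ∑ i, c i * ∑ x, T i x := by
            refine Finset.sum_congr rfl fun i _ => (Finset.mul_sum _ _ _).symm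
        _ = ∑ i, c i := by refine Finset.sum_congr rfl fun i _ => by rw [hT1 i, mul_one]
        _ = 1 := hcsum
    simp only [hg, Finset.sum_sub_distrib, this, hD1, sub_self]
  have hps := pos_part_sum g hgsum
  -- TV = sum over positive part of g
  have htvg : tvDist D (fun x => ∑ i, c i * T i x)
      = ∑ x ∈ univ.filter (fun x => 0 < g x), g x := by
    rw [hps]
    unfold tvDist
    congr 1
    exact Finset.sum_congr rfl fun x _ => (abs_sub_comm _ _)
  -- sum over B of g ≤ positive part sum
  have hBle : ∑ x ∈ B, g x ≤ ∑ x ∈ univ.filter (fun x => 0 < g x), g x := by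
    have h1 : ∑ x ∈ B, g x ≤ ∑ x ∈ B, max (g x) 0 :=
      Finset.sum_le_sum fun x _ => le_max_left _ _
    have h2 : ∑ x ∈ B, max (g x) 0 ≤ ∑ x, max (g x) 0 :=
      Finset.sum_le_sum_of_subset_of_nonneg (Finset.subset_univ _)
        (fun x _ _ => le_max_right _ _)
    have h3 : ∑ x, max (g x) 0 = ∑ x ∈ univ.filter (fun x => 0 < g x), g x := by
      rw [Finset.sum_filter]
      refine Finset.sum_congr rfl fun x _ => ?_
      rcases lt_or_ge 0 (g x) with h | h
      · simp [h, max_eq_left h.le]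
      · simp [not_lt.mpr h, max_eq_right h]
    linarith
  -- sum over B of g is large
  have hBsplit : ∑ x ∈ B, g x = (∑ i, c i * ∑ x ∈ B, T i x) - ∑ x ∈ B, D x := by
    simp only [hg, Finset.sum_sub_distrib]
    congr 1
    rw [Finset.sum_comm]
    exact Finset.sum_congr rfl fun i _ => (Finset.mul_sum _ _ _).symm
  have hTB : ∑ i, c i * (1 - ε i) ≤ ∑ i, c i * ∑ x ∈ B, T i x :=
    Finset.sum_le_sum fun i _ => mul_le_mul_of_nonneg_left (hTiB i) (hc i).le
  have hfinal : 1 - ∑ i, (1 + c i) * ε i ≤ ∑ x ∈ B, g x := by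
    rw [hBsplit]
    have e : ∑ i, (1 + c i) * ε i = ∑ i, ε i + ∑ i, c i * ε i := by
      rw [← Finset.sum_add_distrib]
      exact Finset.sum_congr rfl fun i _ => by ring
    have e2 : ∑ i, c i * (1 - ε i) = 1 - ∑ i, c i * ε i := by
      have : ∑ i, c i * (1 - ε i) = ∑ i, c i - ∑ i, c i * ε i := by
        rw [← Finset.sum_sub_distrib]
        exact Finset.sum_congr rfl fun i _ => by ring
      rw [this, hcsum]
    linarith [hDB, hTB]
  rw [htvg]
  exact le_trans hfinal hBle
end

section
/- Let S be a finite set, let Q₁,…,Q_k : {0,1}^m → {0,1} and Q* : {0,1}^m → S be functions, and let Γ : {0,1}^k × S → {0,1}^n be a map. For σ ∈ S define Γ_σ : {0,1}^k → {0,1}^n by Γ_σ(x₁,…,x_k) = Γ(x₁,…,x_k, σ). Let X be uniform on {0,1}^m and let Y be a probability distribution on {0,1}^n. Suppose there are ε ≥ 0 and τ > 0 such that for every σ ∈ S: (i) the distribution of Γ_σ(Q₁(X),…,Q_k(X)) satisfies ‖Γ_σ(Q₁(X),…,Q_k(X)) − Y‖_TV ≥ 1 − ε, and (ii) Pr[Q*(X)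 = σ] ≥ τ. Then the distribution of Γ(Q₁(X),…,Q_k(X),Q*(X)) satisfies ‖Γ(Q₁(X),…,Q_k(X),Q*(X)) − Y‖_TV ≥ 1 − 4·ε·|S|/τ. -/
open Finset

lemma distOf_le_one {α β : Type*} [Fintype α] [Nonempty α] [DecidableEq β] (f : α → β) (y : β) :
    distOf f y ≤ 1 := by
  unfold distOf
  rw [div_le_one (by exact_mod_cast Fintype.card_pos)]
  exact_mod_cast Finset.card_filter_le _ _

lemma distOf_sum_one {α β : Type*} [Fintype α] [Nonempty α] [Fintype β] [DecidableEq β]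
    (f : α → β) : ∑ y, distOf f y = 1 := by
  unfold distOf
  rw [← Finset.sum_div]
  rw [div_eq_one_iff_eq (by exact_mod_cast Fintype.card_ne_zero)]
  rw [← Nat.cast_sum]
  norm_cast
  exact (Finset.card_eq_sum_card_fiberwise (fun x _ => Finset.mem_univ (f x))).symm

lemma tvDist_eq_one_sub {β : Type*} [Fintype β] (μ ν : β → ℝ)
    (hμ1 : ∑ y, μ y = 1) (hν1 : ∑ y, ν y = 1) :
    tvDist μ ν = 1 - ∑ y, min (μ y) (ν y) := by
  unfold tvDist
  have h : ∀ y, |μ y - ν y| = μ y + ν y - 2 * min (μ y) (ν y) := by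
    intro y
    rcases le_total (μ y) (ν y) with h | h
    · rw [abs_of_nonpos (by linarith), min_eq_left h]; ring
    · rw [abs_of_nonneg (by linarith), min_eq_right h]; ring
  simp_rw [h]
  rw [Finset.sum_sub_distrib, Finset.sum_add_distrib, hμ1, hν1, ← Finset.mul_sum]
  ring

lemma min_sum_le {ι : Type*} (s : Finset ι) (a : ι → ℝ) (b : ℝ)
    (ha : ∀ i ∈ s, 0 ≤ a i) (hb : 0 ≤ b) :
    min (∑ i ∈ s, a i) b ≤ ∑ i ∈ s, min (a i) b := by
  classical
  induction s using Finset.induction_on with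
  | empty => simp [hb]
  | insert _ _ hx ih =>
    rename_i x t
    rw [Finset.sum_insert hx, Finset.sum_insert hx]
    have h1 : min (a x + ∑ i ∈ t, a i) b ≤ min (a x) b + min (∑ i ∈ t, a i) b := by
      have hax := ha x (Finset.mem_insert_self x t)
      have hat : 0 ≤ ∑ i ∈ t, a i := Finset.sum_nonneg fun i hi => ha i (Finset.mem_insert_of_mem hi)
      rcases le_total (a x) b with h | h <;> rcases le_total (∑ i ∈ t, a i) b with h' | h'
      · rw [min_eq_left h, min_eq_left h']; exact min_le_left _ _
      · rw [min_eq_left h, min_eq_right h']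
        calc min _ b ≤ b := min_le_right _ _
          _ ≤ a x + b := by linarith
      · rw [min_eq_right h, min_eq_left h']
        calc min _ b ≤ b := min_le_right _ _
          _ ≤ b + ∑ i ∈ t, a i := by linarith
      · rw [min_eq_right h, min_eq_right h']
        calc min _ b ≤ b := min_le_right _ _
          _ ≤ b + b := by linarith
    exact h1.trans (by gcongr; exact ih fun i hi => ha i (Finset.mem_insert_of_mem hi))


/-- fixing coordinates. -/
theorem tv_dist_fixing_coordinates {S : Type*} [Fintype S] [DecidableEq S]
    (m k n : ℕ)
    (Q : Fin k → (Fin m → Bool) → Bool) (Qstar : (Fin m → Bool) → S)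
    (Γ : (Fin k → Bool) × S → (Fin n → Bool))
    (Y : (Fin n → Bool) → ℝ) (hY0 : ∀ y, 0 ≤ Y y) (hY1 : ∑ y, Y y = 1)
    (ε τ : ℝ) (hε : 0 ≤ ε) (hτ : 0 < τ)
    (h1 : ∀ σ : S, tvDist (distOf (fun x => Γ ((fun j => Q j x), σ))) Y ≥ 1 - ε)
    (h2 : ∀ σ : S, distOf Qstar σ ≥ τ) :
    tvDist (distOf (fun x => Γ ((fun j => Q j x), Qstar x))) Y ≥
      1 - 4 * ε * (Fintype.card S : ℝ) / τ := by
  classical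
  set μ := distOf (fun x => Γ ((fun j => Q j x), Qstar x)) with hμdef
  set ν : S → (Fin n → Bool) → ℝ := fun σ => distOf (fun x => Γ ((fun j => Q j x), σ)) with hνdef
  have hS : Nonempty S := ⟨Qstar (fun _ => false)⟩
  have hτ1 : τ ≤ 1 := le_trans (h2 hS.some) (distOf_le_one _ _)
  -- pointwise bound μ y ≤ ∑ σ, ν σ y
  have key : ∀ y, μ y ≤ ∑ σ : S, ν σ y := by
    intro y
    simp only [hμdef, hνdef, distOf]
    rw [← Finset.sum_div]
    have hpos : (0:ℝ) < (Fintype.card (Fin m → Bool) : ℝ) := by exact_mod_cast Fintype.card_pos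
    have hnum : ((Finset.univ.filter fun x => Γ ((fun j => Q j x), Qstar x) = y).card : ℝ) ≤
        ∑ σ : S, ((Finset.univ.filter fun x => Γ ((fun j => Q j x), σ) = y).card : ℝ) := by
      have hnat : (Finset.univ.filter fun x => Γ ((fun j => Q j x), Qstar x) = y).card ≤
          ∑ σ : S, (Finset.univ.filter fun x => Γ ((fun j => Q j x), σ) = y).card := by
        rw [Finset.card_eq_sum_card_fiberwise
          (f := Qstar) (t := Finset.univ) (fun x _ => Finset.mem_univ (Qstar x))]
        refine Finset.sum_le_sum fun σ _ => Finset.card_le_card ?_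
        intro x hx
        simp only [Finset.mem_filter, Finset.mem_univ, true_and] at hx ⊢
        rw [← hx.2]; exact hx.1
      exact_mod_cast hnat
    exact div_le_div_of_nonneg_right hnum hpos.le
  have hover : ∀ σ : S, ∑ y, min (ν σ y) (Y y) ≤ ε := by
    intro σ
    have := h1 σ
    rw [tvDist_eq_one_sub _ _ (distOf_sum_one _) hY1] at this
    linarith
  have hsum : ∑ y, min (μ y) (Y y) ≤ ε * (Fintype.card S : ℝ) := by
    calc ∑ y, min (μ y) (Y y) ≤ ∑ y, ∑ σ : S, min (ν σ y) (Y y) := by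
          refine Finset.sum_le_sum fun y _ => ?_
          refine le_trans (min_le_min (key y) le_rfl) ?_
          exact min_sum_le _ _ _ (fun σ _ => distOf_nonneg _ _) (hY0 y)
      _ = ∑ σ : S, ∑ y, min (ν σ y) (Y y) := Finset.sum_comm
      _ ≤ ∑ _σ : S, ε := Finset.sum_le_sum fun σ _ => hover σ
      _ = ε * (Fintype.card S : ℝ) := by simp [mul_comm]
  rw [tvDist_eq_one_sub _ _ (distOf_sum_one _) hY1]
  have hdiv : ε * (Fintype.card S : ℝ) ≤ 4 * ε * (Fintype.card S : ℝ) / τ := by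
    rw [le_div_iff₀ hτ]
    have hc : (0:ℝ) ≤ (Fintype.card S : ℝ) := Nat.cast_nonneg _
    nlinarith [mul_nonneg hε hc]
  linarith
end
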